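/- arXiv:0706.1773 — 3 statements merged into one kernel-verified Lean document; each statement's English description precedes it below -/
import Mathlib

section
/- Fix complex numbers a, b and fix γ ∈ (0, π/2). Define, for ε in the sector S⁺ = {ε : 0 < |ε| < r, arg(ε) ∈ (-π+γ, π-γ)}, μ⁺(ε) = (-2πi / (Γ(1-a)Γ(1-b))) · ε^{1-a-b} · Γ(1 + 1/ε) / Γ(a + b + 1/ε). Then lim_{ε→0, ε∈S⁺} μ⁺(ε) = -2πi / (Γ(1-a)Γ(1-b)). -/
open Complex Real Filter
open Topology

noncomputable def Complex.abs : AbsoluteValue ℂ ℝ := NormedField.toAbsoluteValue ℂ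
theorem Complex.abs_apply' (z : ℂ) : Complex.abs z = ‖z‖ := rfl
theorem Complex.norm_eq_abs (z : ℂ) : ‖z‖ = Complex.abs z := rfl
theorem Complex.sq_abs (z : ℂ) : Complex.abs z ^ 2 = Complex.normSq z := Complex.sq_norm z
theorem Complex.abs_re_le_abs (z : ℂ) : |z.re| ≤ Complex.abs z := Complex.abs_re_le_norm z
theorem Complex.continuous_abs : Continuous Complex.abs := continuous_norm
@[simp] theorem Complex.abs_natCast (n : ℕ) : Complex.abs (n : ℂ) = n := by
  rw [Complex.abs_apply', Complex.norm_natCast]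

namespace MuPlusAux

/-- Lower bound for `|z + t|` in a sector avoiding the negative real axis. -/
lemma sector_bound {γ : ℝ} (hγ0 : 0 < γ) (hγ1 : γ < π / 2) {z : ℂ} (hz : z ≠ 0)
    (harg : z.arg ∈ Set.Ioo (-π + γ) (π - γ)) {t : ℝ} (ht : 0 ≤ t) :
    Real.sqrt ((1 - Real.cos γ) / 2) * (Complex.abs z + t) ≤ Complex.abs (z + t) := by
  have hπ := Real.pi_pos
  have hA : 0 < Complex.abs z := Complex.abs.pos hz
  have hcg0 : 0 ≤ Real.cos γ := Real.cos_nonneg_of_mem_Icc ⟨by linarith, by linarith⟩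
  have hcg1 : Real.cos γ < 1 := by
    have := Real.cos_lt_cos_of_nonneg_of_le_pi (le_refl 0) (by linarith : γ ≤ π) hγ0
    simpa using this
  have hcos : -Real.cos γ ≤ Real.cos z.arg := by
    have h1 : |z.arg| ≤ π - γ := by
      rw [abs_le]; exact ⟨by linarith [harg.1], by linarith [harg.2]⟩
    have h2 : Real.cos (π - γ) ≤ Real.cos |z.arg| :=
      Real.cos_le_cos_of_nonneg_of_le_pi (abs_nonneg _) (by linarith) h1
    rw [Real.cos_pi_sub, Real.cos_abs] at h2
    exact h2
  have hre : -(Real.cos γ * Complex.abs z) ≤ z.re := by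
    have h3 := Complex.cos_arg hz
    rw [h3] at hcos
    have := (le_div_iff₀ hA).mp hcos
    linarith
  have hsq : (Real.sqrt ((1 - Real.cos γ) / 2)) ^ 2 = (1 - Real.cos γ) / 2 :=
    Real.sq_sqrt (by linarith)
  have habs : Complex.abs z ^ 2 = z.re ^ 2 + z.im ^ 2 := by
    rw [Complex.sq_abs, Complex.normSq_apply]; ring
  have hzt : Complex.abs (z + t) ^ 2 = (z.re + t) ^ 2 + z.im ^ 2 := by
    rw [Complex.sq_abs, Complex.normSq_apply]
    simp [Complex.add_re, Complex.add_im]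
    ring
  have key : (Real.sqrt ((1 - Real.cos γ) / 2) * (Complex.abs z + t)) ^ 2
      ≤ Complex.abs (z + t) ^ 2 := by
    rw [mul_pow, hsq, hzt]
    nlinarith [sq_nonneg (Complex.abs z - t), hre, hA, ht, habs,
      mul_le_mul_of_nonneg_left hre (by linarith : (0:ℝ) ≤ 2 * t)]
  have h0 : 0 ≤ Real.sqrt ((1 - Real.cos γ) / 2) * (Complex.abs z + t) := by positivity
  nlinarith [Complex.abs.nonneg (z + t)]


/-- Branch-compatible log of a shift: `log (w+1) = log w + log (1 + w⁻¹)`. -/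
lemma log_add_one {w : ℂ} (hw : 2 ≤ Complex.abs w) (h : w.im ≠ 0 ∨ 0 < w.re) :
    Complex.log (w + 1) = Complex.log w + Complex.log (1 + w⁻¹) := by
  have hπ := Real.pi_pos
  have hw0 : w ≠ 0 := by
    intro h0; rw [h0] at hw; simp at hw; linarith
  have hiw : Complex.abs w⁻¹ ≤ 1 / 2 := by
    rw [map_inv₀]
    rw [inv_le_comm₀ (by linarith : (0:ℝ) < Complex.abs w) (by norm_num : (0:ℝ) < 1/2)]
    simpa using hw
  have hre2 : (1/2 : ℝ) ≤ (1 + w⁻¹).re := by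
    have h1 : |(w⁻¹).re| ≤ 1/2 := le_trans (Complex.abs_re_le_abs _) hiw
    have := (abs_le.mp h1).1
    simp only [Complex.add_re, Complex.one_re]
    linarith
  have hne : (1 : ℂ) + w⁻¹ ≠ 0 := by
    intro h0
    rw [h0] at hre2; simp at hre2; linarith
  have harg2 : |(1 + w⁻¹).arg| < π / 2 :=
    Complex.abs_arg_lt_pi_div_two_iff.mpr (Or.inl (by linarith))
  have habs2 := abs_lt.mp harg2
  have key : w + 1 = w * (1 + w⁻¹) := by field_simp
  rw [key, Complex.log_mul hw0 hne]
  constructor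
  · -- -π < arg w + arg (1 + w⁻¹)
    rcases h with him | hrep
    · rcases lt_or_gt_of_ne him with hlt | hgt
      · -- im < 0 : arg (1+w⁻¹) ≥ 0
        have h2 : 0 ≤ (1 + w⁻¹).im := by
          rw [Complex.add_im, Complex.one_im, Complex.inv_im]
          have h5 : 0 < Complex.normSq w := Complex.normSq_pos.mpr hw0
          have : (0:ℝ) ≤ -w.im := by linarith
          positivity
        have := Complex.arg_nonneg_iff.mpr h2
        linarith [Complex.neg_pi_lt_arg w]
      · have h2 := Complex.arg_nonneg_iff.mpr hgt.le
        linarith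
    · rcases le_or_gt 0 w.im with h3 | h3
      · have := Complex.arg_nonneg_iff.mpr h3
        linarith
      · -- im < 0
        have h4 : 0 ≤ (1 + w⁻¹).im := by
          rw [Complex.add_im, Complex.one_im, Complex.inv_im]
          have h5 : 0 < Complex.normSq w := Complex.normSq_pos.mpr hw0
          have : (0:ℝ) ≤ -w.im := by linarith
          positivity
        have := Complex.arg_nonneg_iff.mpr h4
        linarith [Complex.neg_pi_lt_arg w]
  · -- arg w + arg (1 + w⁻¹) ≤ π
    rcases le_or_gt 0 w.im with h3 | h3
    · -- im ≥ 0 : arg (1+w⁻¹) ≤ 0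
      have h4 : (1 + w⁻¹).im ≤ 0 := by
        rw [Complex.add_im, Complex.one_im, Complex.inv_im, zero_add]
        have h5 : 0 < Complex.normSq w := Complex.normSq_pos.mpr hw0
        have h6 : -w.im ≤ 0 := by linarith
        exact div_nonpos_of_nonpos_of_nonneg h6 h5.le
      have h6 : ¬ (0 < (1 + w⁻¹).arg) := by
        intro hpos
        have := Complex.arg_nonneg_iff.mp hpos.le
        -- need strict: if arg > 0 then im > 0? use arg_neg_iff contrapositive
        rcases lt_or_eq_of_le h4 with h7 | h7
        · have := Complex.arg_neg_iff.mpr h7; linarith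
        · -- im = 0, re > 0 : arg = 0
          have : (1 + w⁻¹).arg = 0 := Complex.arg_eq_zero_iff.mpr ⟨by linarith, h7⟩
          linarith
      push_neg at h6
      linarith [Complex.arg_le_pi w]
    · -- im < 0 : arg w < 0
      have := Complex.arg_neg_iff.mpr h3
      linarith

/-- Quadratic estimate for `log (1 + u) - u`. -/
lemma log_est {u : ℂ} (hu : Complex.abs u ≤ 1 / 2) :
    Complex.abs (Complex.log (1 + u) - u) ≤ Complex.abs u ^ 2 := by
  have h1 : ‖u‖ < 1 := lt_of_le_of_lt (by simpa [Complex.norm_eq_abs] using hu) (by norm_num)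
  have h2 := Complex.norm_log_one_add_sub_self_le h1
  have h3 : (1 - ‖u‖)⁻¹ ≤ 2 := by
    rw [Complex.norm_eq_abs] at *
    rw [inv_le_comm₀ (by linarith) (by norm_num)]
    linarith
  rw [Complex.norm_eq_abs] at h2 h3 h1
  calc Complex.abs (Complex.log (1 + u) - u)
      ≤ Complex.abs u ^ 2 * (1 - Complex.abs u)⁻¹ / 2 := h2
    _ ≤ Complex.abs u ^ 2 * 2 / 2 := by
        have := sq_nonneg (Complex.abs u)
        gcongr
    _ = Complex.abs u ^ 2 := by ring

lemma abs_sub_le'' (x y : ℂ) : Complex.abs (x - y) ≤ Complex.abs x + Complex.abs y := by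
  simpa [Complex.norm_eq_abs] using norm_sub_le x y

/-- Tail bound for the sum of inverse squares. -/
lemma sum_sq_le {x : ℝ} (hx : 1 < x) (N : ℕ) :
    ∑ j ∈ Finset.range N, (1 / (x + j)) ^ 2 ≤ 1 / (x - 1) := by
  have key : ∀ j ∈ Finset.range N, (1 / (x + j)) ^ 2
      ≤ 1 / (x - 1 + j) - 1 / (x + j) := by
    intro j _
    have hj : (0:ℝ) ≤ (j:ℝ) := Nat.cast_nonneg j
    have h0 : (0:ℝ) < x - 1 + j := by linarith
    have h1 : (0:ℝ) < x + j := by linarith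
    have heq : 1 / (x - 1 + j) - 1 / (x + j) = 1 / ((x - 1 + j) * (x + j)) := by
      field_simp
      try ring
    rw [heq, div_pow, one_pow]
    apply one_div_le_one_div_of_le (by positivity)
    nlinarith
  calc ∑ j ∈ Finset.range N, (1 / (x + j)) ^ 2
      ≤ ∑ j ∈ Finset.range N, (1 / (x - 1 + j) - 1 / (x + j)) := Finset.sum_le_sum key
    _ = ∑ j ∈ Finset.range N,
          ((fun i : ℕ => 1 / (x - 1 + (i:ℝ))) j - (fun i : ℕ => 1 / (x - 1 + (i:ℝ))) (j+1)) := by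
        apply Finset.sum_congr rfl
        intro j _
        simp only []
        push_cast
        try ring
    _ = 1 / (x - 1 + ((0:ℕ):ℝ)) - 1 / (x - 1 + ((N:ℕ):ℝ)) := Finset.sum_range_sub' _ N
    _ ≤ 1 / (x - 1) := by
        have hN : (0:ℝ) ≤ (N:ℝ) := Nat.cast_nonneg N
        have h0 : (0:ℝ) < x - 1 + N := by linarith
        have : 0 ≤ 1 / (x - 1 + (N:ℝ)) := by positivity
        simp only [Nat.cast_zero, add_zero]
        linarith


set_option maxHeartbeats 1000000 in
/-- Key sectorial asymptotics: `z^(s-1) Γ(z+1)/Γ(z+s) → 1` in a sector. -/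
lemma key (s : ℂ) {γ : ℝ} (hγ0 : 0 < γ) (hγ1 : γ < π / 2) :
    ∃ R D : ℝ, 1 ≤ R ∧ 0 < D ∧ ∀ z : ℂ, R ≤ Complex.abs z →
      z.arg ∈ Set.Ioo (-π + γ) (π - γ) →
      Complex.abs (z ^ (s - 1) * Complex.Gamma (z + 1) / Complex.Gamma (z + s) - 1)
        ≤ D / Complex.abs z := by
  have hπ := Real.pi_pos
  set c : ℝ := Real.sqrt ((1 - Real.cos γ) / 2) with hcdef
  have hcg0 : 0 ≤ Real.cos γ := Real.cos_nonneg_of_mem_Icc ⟨by linarith, by linarith⟩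
  have hcg1 : Real.cos γ < 1 := by
    have := Real.cos_lt_cos_of_nonneg_of_le_pi (le_refl 0) (by linarith : γ ≤ π) hγ0
    simpa using this
  have hc0 : 0 < c := Real.sqrt_pos.mpr (by linarith)
  have hc1 : c ≤ 1 := by
    rw [hcdef]
    exact Real.sqrt_le_one.mpr (by nlinarith [Real.neg_one_le_cos γ])
  have hc2 : c ^ 2 = (1 - Real.cos γ) / 2 := Real.sq_sqrt (by linarith)
  set K : ℝ := Complex.abs (s - 1) with hKdef
  have hK0 : 0 ≤ K := Complex.abs.nonneg _
  set M1 : ℝ := (K + K ^ 2) / c ^ 2 with hM1def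
  have hM10 : 0 ≤ M1 := by positivity
  set M2 : ℝ := 2 * K + M1 with hM2def
  have hM20 : 0 ≤ M2 := by positivity
  set X : ℝ := 2 + 2 * K + M2 + 2 with hXdef
  have hX2 : 2 ≤ X := by linarith
  refine ⟨X / c, 2 * M2 + 1, ?_, by positivity, ?_⟩
  · rw [le_div_iff₀ hc0]; linarith
  intro z hzR hzarg
  set A : ℝ := Complex.abs z with hAdef
  have hz0 : z ≠ 0 := by
    intro h
    have hA0' : A = 0 := by rw [hAdef, h, map_zero]
    have h1 : 0 < X / c := by positivity
    rw [hA0'] at hzR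
    linarith
  have hA0 : 0 < A := Complex.abs.pos hz0
  have hcA : X ≤ c * A := by
    have := (div_le_iff₀ hc0).mp hzR
    linarith
  have hA2 : 2 ≤ A := by
    have e2 : (1 - c) * A = A - c * A := by ring
    nlinarith [mul_nonneg (by linarith : (0:ℝ) ≤ 1 - c) hA0.le]
  -- sector bound for shifted points
  have hsec : ∀ t : ℝ, 0 ≤ t → c * (A + t) ≤ Complex.abs (z + t) := fun t ht =>
    sector_bound hγ0 hγ1 hz0 hzarg ht
  have hw : ∀ j : ℕ, c * (A + (1 + j)) ≤ Complex.abs (z + 1 + j) := by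
    intro j
    have h1 := hsec (1 + j) (by positivity)
    have h2 : z + ((1 + (j:ℝ) : ℝ) : ℂ) = z + 1 + j := by push_cast; ring
    rwa [h2] at h1
  have hw2 : ∀ j : ℕ, 2 ≤ Complex.abs (z + 1 + j) := by
    intro j
    have h1 := hw j
    have hj : (0:ℝ) ≤ (j:ℝ) := Nat.cast_nonneg j
    nlinarith
  have hwne : ∀ j : ℕ, z + 1 + (j:ℂ) ≠ 0 := by
    intro j
    have := hw2 j
    intro h0
    rw [h0] at this
    simp at this
    linarith
  -- the shifted points stay in the branch-friendly region
  have himz : z.im ≠ 0 ∨ 0 < z.re := by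
    by_cases h : z.im = 0
    · right
      rcases lt_trichotomy z.re 0 with h1 | h1 | h1
      · exfalso
        have := Complex.arg_eq_pi_iff.mpr ⟨h1, h⟩
        have h2 := hzarg.2
        rw [this] at h2
        linarith
      · exfalso; exact hz0 (Complex.ext h1 h)
      · exact h1
    · left; exact h
  have himw : ∀ j : ℕ, (z + 1 + (j:ℂ)).im ≠ 0 ∨ 0 < (z + 1 + (j:ℂ)).re := by
    intro j
    have him : (z + 1 + (j:ℂ)).im = z.im := by simp
    have hre : (z + 1 + (j:ℂ)).re = z.re + 1 + j := by simp
    rcases himz with h | h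
    · left; rw [him]; exact h
    · right; rw [hre]; have : (0:ℝ) ≤ (j:ℝ) := Nat.cast_nonneg j; linarith
  -- nonvanishing of z + s + j
  have hzsabs : ∀ j : ℕ, c * (A + (1 + j)) - K ≤ Complex.abs (z + s + j) := by
    intro j
    have h1 : Complex.abs (z + 1 + j) ≤ Complex.abs (z + s + j) + K := by
      have h2 : z + 1 + (j:ℂ) = (z + s + j) + (1 - s) := by ring
      rw [h2]
      have h3 : Complex.abs (1 - s) = K := by
        rw [hKdef, ← Complex.abs.map_neg (1 - s)]; ring_nf
      calc Complex.abs ((z + s + j) + (1 - s))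
          ≤ Complex.abs (z + s + j) + Complex.abs (1 - s) := Complex.abs.add_le _ _
        _ = Complex.abs (z + s + j) + K := by rw [h3]
    linarith [hw j]
  have hzs : ∀ j : ℕ, z + s + (j:ℂ) ≠ 0 := by
    intro j
    have h1 := hzsabs j
    have hj : (0:ℝ) ≤ (j:ℝ) := Nat.cast_nonneg j
    have h2 : 0 < Complex.abs (z + s + j) := by nlinarith
    exact Complex.abs.pos_iff.mp h2
  have hGne : Complex.Gamma (z + s) ≠ 0 := by
    apply Complex.Gamma_ne_zero
    intro m hm
    apply hzs m
    rw [hm]; ring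
  -- inverse bounds
  have hvb : ∀ j : ℕ, Complex.abs (z + 1 + (j:ℂ))⁻¹ ≤ 1 / (c * (A + (1 + j))) := by
    intro j
    have h1 := hw j
    have hj : (0:ℝ) ≤ (j:ℝ) := Nat.cast_nonneg j
    have h2 : 0 < c * (A + (1 + j)) := by positivity
    rw [map_inv₀, one_div]
    exact inv_anti₀ h2 h1
  have hv2 : ∀ j : ℕ, Complex.abs (z + 1 + (j:ℂ))⁻¹ ≤ 1 / 2 := by
    intro j
    refine le_trans (hvb j) ?_
    have hj : (0:ℝ) ≤ (j:ℝ) := Nat.cast_nonneg j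
    have e1 : c * (A + (1 + (j:ℝ))) = c * A + c * (1 + (j:ℝ)) := by ring
    rw [div_le_div_iff₀ (by positivity) (by norm_num), e1]
    linarith [mul_nonneg hc0.le (by linarith : (0:ℝ) ≤ 1 + (j:ℝ))]
  have hub : ∀ j : ℕ, Complex.abs ((s - 1) * (z + 1 + (j:ℂ))⁻¹) ≤ 1 / 2 := by
    intro j
    rw [map_mul, ← hKdef]
    have h1 := hvb j
    have hj : (0:ℝ) ≤ (j:ℝ) := Nat.cast_nonneg j
    have h2 : 0 < c * (A + (1 + j)) := by positivity
    calc K * Complex.abs (z + 1 + (j:ℂ))⁻¹ ≤ K * (1 / (c * (A + (1 + j)))) :=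
          mul_le_mul_of_nonneg_left h1 hK0
      _ ≤ 1 / 2 := by
          have e1 : c * (A + (1 + (j:ℝ))) = c * A + c * (1 + (j:ℝ)) := by ring
          rw [mul_one_div, div_le_iff₀ h2, e1]
          have e2 := mul_nonneg hc0.le (by linarith : (0:ℝ) ≤ 1 + (j:ℝ))
          nlinarith
  -- termwise estimate
  have hterm : ∀ j : ℕ,
      Complex.abs (Complex.log ((z + s + j) / (z + 1 + j))
        - (s - 1) * (Complex.log (z + 1 + ((j + 1 : ℕ) : ℂ)) - Complex.log (z + 1 + j)))
      ≤ (K + K ^ 2) * (1 / (c * (A + (1 + j)))) ^ 2 := by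
    intro j
    have hfrac : (z + s + (j:ℂ)) / (z + 1 + j) = 1 + (s - 1) * (z + 1 + (j:ℂ))⁻¹ := by
      rw [div_eq_iff (hwne j)]
      field_simp [hwne j]
      try ring
    have hcast : z + 1 + ((j + 1 : ℕ) : ℂ) = (z + 1 + j) + 1 := by push_cast; ring
    have hlog : Complex.log (z + 1 + ((j + 1 : ℕ) : ℂ)) - Complex.log (z + 1 + j)
        = Complex.log (1 + (z + 1 + (j:ℂ))⁻¹) := by
      rw [hcast, log_add_one (hw2 j) (himw j)]
      ring
    rw [hfrac, hlog]
    have hsplit : Complex.log (1 + (s - 1) * (z + 1 + (j:ℂ))⁻¹)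
        - (s - 1) * Complex.log (1 + (z + 1 + (j:ℂ))⁻¹)
        = (Complex.log (1 + (s - 1) * (z + 1 + (j:ℂ))⁻¹) - (s - 1) * (z + 1 + (j:ℂ))⁻¹)
          - (s - 1) * (Complex.log (1 + (z + 1 + (j:ℂ))⁻¹) - (z + 1 + (j:ℂ))⁻¹) := by
      ring
    rw [hsplit]
    have e1 := log_est (hub j)
    have e2 := log_est (hv2 j)
    have hj : (0:ℝ) ≤ (j:ℝ) := Nat.cast_nonneg j
    have h2 : 0 < c * (A + (1 + j)) := by positivity
    have hvbnd := hvb j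
    have hvnn : (0:ℝ) ≤ Complex.abs (z + 1 + (j:ℂ))⁻¹ := Complex.abs.nonneg _
    have htri : Complex.abs
        ((Complex.log (1 + (s - 1) * (z + 1 + (j:ℂ))⁻¹) - (s - 1) * (z + 1 + (j:ℂ))⁻¹)
          - (s - 1) * (Complex.log (1 + (z + 1 + (j:ℂ))⁻¹) - (z + 1 + (j:ℂ))⁻¹))
        ≤ Complex.abs (Complex.log (1 + (s - 1) * (z + 1 + (j:ℂ))⁻¹) - (s - 1) * (z + 1 + (j:ℂ))⁻¹)
          + K * Complex.abs (Complex.log (1 + (z + 1 + (j:ℂ))⁻¹) - (z + 1 + (j:ℂ))⁻¹) := by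
      refine le_trans (abs_sub_le'' _ _) ?_
      rw [map_mul, ← hKdef]
    have hsq : Complex.abs ((s - 1) * (z + 1 + (j:ℂ))⁻¹) ^ 2
        = K ^ 2 * Complex.abs (z + 1 + (j:ℂ))⁻¹ ^ 2 := by
      rw [map_mul, ← hKdef]; ring
    have hv2sq : Complex.abs (z + 1 + (j:ℂ))⁻¹ ^ 2 ≤ (1 / (c * (A + (1 + j)))) ^ 2 :=
      pow_le_pow_left₀ hvnn hvbnd 2
    calc Complex.abs _ ≤ _ := htri
      _ ≤ Complex.abs ((s - 1) * (z + 1 + (j:ℂ))⁻¹) ^ 2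
          + K * Complex.abs (z + 1 + (j:ℂ))⁻¹ ^ 2 := by
          gcongr
      _ = K ^ 2 * Complex.abs (z + 1 + (j:ℂ))⁻¹ ^ 2 + K * Complex.abs (z + 1 + (j:ℂ))⁻¹ ^ 2 := by
          rw [hsq]
      _ ≤ (K + K ^ 2) * (1 / (c * (A + (1 + j)))) ^ 2 := by nlinarith
  -- sum of errors
  have hsum : ∀ N : ℕ,
      ∑ j ∈ Finset.range (N + 1), (K + K ^ 2) * (1 / (c * (A + (1 + j)))) ^ 2 ≤ M1 / A := by
    intro N
    have h1 : ∀ j ∈ Finset.range (N + 1), (K + K ^ 2) * (1 / (c * (A + (1 + j)))) ^ 2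
        = ((K + K ^ 2) / c ^ 2) * (1 / ((A + 1) + j)) ^ 2 := by
      intro j _
      have hj : (0:ℝ) ≤ (j:ℝ) := Nat.cast_nonneg j
      have hd1 : c * (A + (1 + (j:ℝ))) ≠ 0 := by positivity
      have hd2 : (A + 1) + (j:ℝ) ≠ 0 := by positivity
      rw [show c * (A + (1 + (j:ℝ))) = c * ((A + 1) + (j:ℝ)) from by ring]
      field_simp
    rw [Finset.sum_congr rfl h1, ← Finset.mul_sum]
    have h2 := sum_sq_le (x := A + 1) (by linarith) (N + 1)
    calc ((K + K ^ 2) / c ^ 2) * ∑ j ∈ Finset.range (N + 1), (1 / ((A + 1) + (j:ℝ))) ^ 2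
        ≤ ((K + K ^ 2) / c ^ 2) * (1 / (A + 1 - 1)) := by
          exact mul_le_mul_of_nonneg_left h2 (by positivity)
      _ = M1 / A := by
          rw [hM1def]
          have : A + 1 - 1 = A := by ring
          rw [this]
          field_simp
  -- the two auxiliary sequences
  set Q : ℕ → ℂ := fun N =>
    (s - 1) * (Complex.log z - Complex.log (z + 1)) +
      (∑ j ∈ Finset.range (N + 1), Complex.log ((z + s + j) / (z + 1 + j))
        - (s - 1) * (Complex.log (z + 1 + ((N + 1 : ℕ) : ℂ))
            - Complex.log (z + 1 + ((0 : ℕ) : ℂ)))) with hQdef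
  set T : ℕ → ℂ := fun N =>
    (s - 1) * (Complex.log (z + 1 + ((N + 1 : ℕ) : ℂ)) - Complex.log (N : ℂ)) with hTdef
  -- bound on Q
  have hQb : ∀ N : ℕ, Complex.abs (Q N) ≤ M2 / A := by
    intro N
    have hpart1 : Complex.abs ((s - 1) * (Complex.log z - Complex.log (z + 1))) ≤ 2 * K / A := by
      have hz2 : (2:ℝ) ≤ Complex.abs z := by rw [← hAdef]; exact hA2
      have hlz : Complex.log (z + 1) = Complex.log z + Complex.log (1 + z⁻¹) :=
        log_add_one hz2 himz
      have h3 : (s - 1) * (Complex.log z - Complex.log (z + 1))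
          = -((s - 1) * Complex.log (1 + z⁻¹)) := by rw [hlz]; ring
      rw [h3, Complex.abs.map_neg, map_mul, ← hKdef]
      have h4 : Complex.abs z⁻¹ ≤ 1 / 2 := by
        rw [map_inv₀, ← hAdef]
        calc A⁻¹ ≤ 2⁻¹ := inv_anti₀ (by norm_num) hA2
          _ = 1 / 2 := by norm_num
      have h5 : Complex.abs (Complex.log (1 + z⁻¹)) ≤ 3 / 2 * Complex.abs z⁻¹ := by
        have := Complex.norm_log_one_add_half_le_self (z := z⁻¹)
          (by simpa [Complex.norm_eq_abs] using h4)
        simpa [Complex.norm_eq_abs] using this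
      calc K * Complex.abs (Complex.log (1 + z⁻¹)) ≤ K * (3 / 2 * Complex.abs z⁻¹) :=
            mul_le_mul_of_nonneg_left h5 hK0
        _ = 3 / 2 * K * (Complex.abs z)⁻¹ := by rw [map_inv₀]; ring
        _ ≤ 2 * K / A := by
            rw [← hAdef]
            have e3 : (2:ℝ) * K / A = 2 * K * A⁻¹ := by ring
            rw [e3]
            apply mul_le_mul_of_nonneg_right (by linarith) (by positivity)
    have hpart2 : Complex.abs
        (∑ j ∈ Finset.range (N + 1), Complex.log ((z + s + j) / (z + 1 + j))
          - (s - 1) * (Complex.log (z + 1 + ((N + 1 : ℕ) : ℂ))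
              - Complex.log (z + 1 + ((0 : ℕ) : ℂ)))) ≤ M1 / A := by
      have htele : (s - 1) * (Complex.log (z + 1 + ((N + 1 : ℕ) : ℂ))
            - Complex.log (z + 1 + ((0 : ℕ) : ℂ)))
          = ∑ j ∈ Finset.range (N + 1),
              (s - 1) * (Complex.log (z + 1 + ((j + 1 : ℕ) : ℂ)) - Complex.log (z + 1 + (j:ℂ))) := by
        rw [← Finset.mul_sum]
        congr 1
        exact (Finset.sum_range_sub (fun j : ℕ => Complex.log (z + 1 + (j:ℂ))) (N + 1)).symm
      rw [htele, ← Finset.sum_sub_distrib]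
      refine le_trans (Complex.abs.sum_le _ _) ?_
      exact le_trans (Finset.sum_le_sum fun j _ => hterm j) (hsum N)
    calc Complex.abs (Q N) ≤ Complex.abs ((s - 1) * (Complex.log z - Complex.log (z + 1)))
          + Complex.abs
            (∑ j ∈ Finset.range (N + 1), Complex.log ((z + s + j) / (z + 1 + j))
              - (s - 1) * (Complex.log (z + 1 + ((N + 1 : ℕ) : ℂ))
                  - Complex.log (z + 1 + ((0 : ℕ) : ℂ)))) := by
          rw [hQdef]
          exact Complex.abs.add_le _ _
      _ ≤ 2 * K / A + M1 / A := add_le_add hpart1 hpart2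
      _ = M2 / A := by rw [hM2def, add_div]
  -- the exponential identity
  have hid : ∀ N : ℕ, 1 ≤ N →
      z ^ (s - 1) * (Complex.GammaSeq (z + 1) N / Complex.GammaSeq (z + s) N)
        = Complex.exp (Q N + T N) := by
    intro N hN
    have hN0 : (N : ℂ) ≠ 0 := Nat.cast_ne_zero.mpr (by omega)
    have hP1 : (∏ j ∈ Finset.range (N + 1), (z + 1 + j)) ≠ 0 :=
      Finset.prod_ne_zero_iff.mpr fun j _ => hwne j
    have hP2 : (∏ j ∈ Finset.range (N + 1), (z + s + j)) ≠ 0 :=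
      Finset.prod_ne_zero_iff.mpr fun j _ => hzs j
    have hexp1 : Complex.exp (∑ j ∈ Finset.range (N + 1), Complex.log ((z + s + j) / (z + 1 + j)))
        = (∏ j ∈ Finset.range (N + 1), (z + s + j)) / (∏ j ∈ Finset.range (N + 1), (z + 1 + j)) := by
      rw [Complex.exp_sum, ← Finset.prod_div_distrib]
      exact Finset.prod_congr rfl fun j _ => Complex.exp_log (div_ne_zero (hzs j) (hwne j))
    have hQT : Q N + T N = Complex.log z * (s - 1) + Complex.log (N:ℂ) * (1 - s)
        + ∑ j ∈ Finset.range (N + 1), Complex.log ((z + s + j) / (z + 1 + j)) := by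
      rw [hQdef, hTdef]
      simp only []
      have h0 : z + 1 + ((0 : ℕ) : ℂ) = z + 1 := by push_cast; ring
      rw [h0]
      ring
    rw [hQT, Complex.exp_add, Complex.exp_add,
      ← Complex.cpow_def_of_ne_zero hz0 (s - 1), ← Complex.cpow_def_of_ne_zero hN0 (1 - s), hexp1]
    have hNs : (N:ℂ) ^ ((1:ℂ) - s) = (N:ℂ) ^ (z + 1) / (N:ℂ) ^ (z + s) := by
      rw [← Complex.cpow_sub _ _ hN0]
      congr 1
      ring
    rw [hNs, Complex.GammaSeq, Complex.GammaSeq]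
    have hNz1 : (N:ℂ) ^ (z + s) ≠ 0 := by
      simp [Complex.cpow_eq_zero_iff, hN0]
    have hNz2 : (N:ℂ) ^ (z + 1) ≠ 0 := by
      simp [Complex.cpow_eq_zero_iff, hN0]
    have hF : (N.factorial : ℂ) ≠ 0 := Nat.cast_ne_zero.mpr (Nat.factorial_ne_zero N)
    field_simp
  -- exp (T N) → 1
  have hTlim : Tendsto (fun N : ℕ => Complex.exp (T N)) atTop (𝓝 1) := by
    have h0 : Tendsto (fun N : ℕ => (z + 2) / (N:ℂ)) atTop (𝓝 0) := by
      rw [tendsto_zero_iff_norm_tendsto_zero]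
      have heq : (fun N : ℕ => ‖(z + 2) / (N:ℂ)‖) = fun N : ℕ => ‖z + 2‖ / (N:ℝ) := by
        funext N
        rw [norm_div, Complex.norm_natCast]
      rw [heq]
      exact tendsto_const_div_atTop_nhds_zero_nat _
    have h1 : Tendsto (fun N : ℕ => Complex.log (1 + (z + 2) / (N:ℂ))) atTop (𝓝 0) := by
      have hcont : ContinuousAt Complex.log 1 :=
        continuousAt_clog Complex.one_mem_slitPlane
      have h2 : Tendsto (fun N : ℕ => 1 + (z + 2) / (N:ℂ)) atTop (𝓝 1) := by
        simpa using tendsto_const_nhds.add h0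
      have h3 := hcont.tendsto.comp h2
      simpa [Function.comp_def] using h3
    have h3 : Tendsto (fun N : ℕ => T N) atTop (𝓝 0) := by
      have h4 : Tendsto (fun N : ℕ => (s - 1) * Complex.log (1 + (z + 2) / (N:ℂ))) atTop (𝓝 0) := by
        simpa using h1.const_mul (s - 1)
      refine Tendsto.congr' ?_ h4
      filter_upwards [eventually_gt_atTop (max 1 ⌈Complex.abs (z + 2)⌉₊)] with N hN
      have hN1 : 1 ≤ N := le_of_lt (lt_of_le_of_lt (le_max_left _ _) hN)
      have hNR : (0:ℝ) < (N:ℝ) := by exact_mod_cast Nat.pos_of_ne_zero (by omega)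
      have hN0 : (N:ℂ) ≠ 0 := Nat.cast_ne_zero.mpr (by omega)
      have hNa : Complex.abs (z + 2) < (N:ℝ) := by
        have h5 : (⌈Complex.abs (z + 2)⌉₊ : ℝ) < (N:ℝ) := by
          exact_mod_cast lt_of_le_of_lt (le_max_right 1 _) hN
        exact lt_of_le_of_lt (Nat.le_ceil _) h5
      have hne : 1 + (z + 2) / (N:ℂ) ≠ 0 := by
        intro h
        have h6 : z + 2 = -(N:ℂ) := by
          field_simp at h
          linear_combination h
        have h7 : Complex.abs (z + 2) = (N:ℝ) := by
          rw [h6, Complex.abs.map_neg]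
          simp
        linarith
      have hsplit : z + 1 + ((N + 1 : ℕ) : ℂ) = ((N:ℝ) : ℂ) * (1 + (z + 2) / (N:ℂ)) := by
        push_cast
        field_simp
        ring
      rw [hTdef]
      simp only []
      rw [hsplit, Complex.log_ofReal_mul hNR hne, ← Complex.natCast_log]
      ring
    have h5 := (Complex.continuous_exp.tendsto 0).comp h3
    simpa [Function.comp_def] using h5
  -- put everything together
  have hGr : Tendsto
      (fun N : ℕ => z ^ (s - 1) * (Complex.GammaSeq (z + 1) N / Complex.GammaSeq (z + s) N)) atTop
      (𝓝 (z ^ (s - 1) * (Complex.Gamma (z + 1) / Complex.Gamma (z + s)))) :=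
    ((Complex.GammaSeq_tendsto_Gamma (z + 1)).div (Complex.GammaSeq_tendsto_Gamma (z + s))
      hGne).const_mul _
  have hQlim : Tendsto (fun N : ℕ => Complex.exp (Q N)) atTop
      (𝓝 (z ^ (s - 1) * (Complex.Gamma (z + 1) / Complex.Gamma (z + s)))) := by
    have h5 := hGr.div hTlim one_ne_zero
    rw [div_one] at h5
    refine Tendsto.congr' ?_ h5
    filter_upwards [eventually_ge_atTop 1] with N hN
    simp only [Pi.div_apply]
    rw [hid N hN, Complex.exp_add, mul_div_assoc, div_self (Complex.exp_ne_zero _), mul_one]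
  have hQA : M2 / A ≤ 1 := by
    rw [div_le_one hA0]
    nlinarith [mul_nonneg (by linarith : (0:ℝ) ≤ 1 - c) hA0.le]
  have hbound : ∀ N : ℕ, Complex.abs (Complex.exp (Q N) - 1) ≤ 2 * (M2 / A) := by
    intro N
    calc Complex.abs (Complex.exp (Q N) - 1) ≤ 2 * Complex.abs (Q N) :=
          Complex.norm_exp_sub_one_le (le_trans (hQb N) hQA)
      _ ≤ 2 * (M2 / A) := by linarith [hQb N]
  have habs : Tendsto (fun N : ℕ => Complex.abs (Complex.exp (Q N) - 1)) atTop
      (𝓝 (Complex.abs (z ^ (s - 1) * (Complex.Gamma (z + 1) / Complex.Gamma (z + s)) - 1))) :=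
    (Complex.continuous_abs.tendsto _).comp (hQlim.sub tendsto_const_nhds)
  have hfin := le_of_tendsto habs (Filter.Eventually.of_forall hbound)
  calc Complex.abs (z ^ (s - 1) * Complex.Gamma (z + 1) / Complex.Gamma (z + s) - 1)
      = Complex.abs (z ^ (s - 1) * (Complex.Gamma (z + 1) / Complex.Gamma (z + s)) - 1) := by
        rw [mul_div_assoc]
    _ ≤ 2 * (M2 / A) := hfin
    _ ≤ (2 * M2 + 1) / A := by
        rw [mul_div_assoc']
        gcongr
        linarith

end MuPlusAux

/-- The unfolded Stokes coefficient
`μ⁺(ε) = (-2πi/(Γ(1-a)Γ(1-b)))·ε^{1-a-b}·Γ(1+1/ε)/Γ(a+b+1/ε)`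
tends, as `ε → 0` in the sector `S⁺`, to the Stokes multiplier
`μ = -2πi/(Γ(1-a)Γ(1-b))`. -/
theorem muPlus_tendsto_mu (a b : ℂ) (γ : ℝ) (hγ : γ ∈ Set.Ioo 0 (π / 2)) :
    ∃ r : ℝ, 0 < r ∧
      Tendsto
        (fun ε : ℂ =>
          (-2 * π * I / (Complex.Gamma (1 - a) * Complex.Gamma (1 - b))) *
            ε ^ (1 - a - b) * Complex.Gamma (1 + 1 / ε) / Complex.Gamma (a + b + 1 / ε))
        (nhdsWithin 0
          {ε : ℂ | 0 < ‖ε‖ ∧ ‖ε‖ < r ∧ ε.arg ∈ Set.Ioo (-π + γ) (π - γ)})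
        (nhds (-2 * π * I / (Complex.Gamma (1 - a) * Complex.Gamma (1 - b)))) := by
  obtain ⟨R, D, hR1, hD, hkey⟩ := MuPlusAux.key (a + b) hγ.1 hγ.2
  have hR0 : 0 < R := lt_of_lt_of_le one_pos hR1
  refine ⟨1 / R, by positivity, ?_⟩
  have hg : Tendsto
      (fun ε : ℂ => ε ^ (1 - a - b) * Complex.Gamma (1 + 1 / ε) / Complex.Gamma (a + b + 1 / ε))
      (nhdsWithin 0
        {ε : ℂ | 0 < ‖ε‖ ∧ ‖ε‖ < 1 / R ∧
          ε.arg ∈ Set.Ioo (-π + γ) (π - γ)})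
      (nhds 1) := by
    rw [← tendsto_sub_nhds_zero_iff]
    have hg0 : Tendsto (fun ε : ℂ => D * Complex.abs ε)
        (nhdsWithin 0
          {ε : ℂ | 0 < ‖ε‖ ∧ ‖ε‖ < 1 / R ∧
            ε.arg ∈ Set.Ioo (-π + γ) (π - γ)})
        (nhds 0) := by
      have h1 := (Complex.continuous_abs.tendsto 0).const_mul D
      simp only [map_zero, mul_zero] at h1
      exact h1.mono_left nhdsWithin_le_nhds
    apply squeeze_zero_norm' ?_ hg0
    filter_upwards [self_mem_nhdsWithin] with ε hε
    obtain ⟨habs0, habsr, hargm⟩ := hε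
    have hε0 : ε ≠ 0 := by
      intro h
      rw [h] at habs0
      simp at habs0
    have hargpi : ε.arg ≠ π := by
      intro h
      have h2 := hargm.2
      rw [h] at h2
      linarith [hγ.1]
    have hinvarg : (ε⁻¹).arg ∈ Set.Ioo (-π + γ) (π - γ) := by
      rw [Complex.arg_inv, if_neg hargpi]
      exact ⟨by linarith [hargm.2], by linarith [hargm.1]⟩
    have habsinv : R ≤ Complex.abs ε⁻¹ := by
      rw [map_inv₀]
      calc R = (1 / R)⁻¹ := by rw [one_div, inv_inv]
        _ ≤ (Complex.abs ε)⁻¹ := inv_anti₀ habs0 (le_of_lt habsr)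
    have hkey' := hkey ε⁻¹ habsinv hinvarg
    have hfun : ε ^ (1 - a - b) * Complex.Gamma (1 + 1 / ε) / Complex.Gamma (a + b + 1 / ε)
        = ε⁻¹ ^ (a + b - 1) * Complex.Gamma (ε⁻¹ + 1) / Complex.Gamma (ε⁻¹ + (a + b)) := by
      rw [one_div]
      have e1 : ε ^ (1 - a - b) = ε⁻¹ ^ (a + b - 1) := by
        rw [Complex.inv_cpow _ _ hargpi, ← Complex.cpow_neg]
        congr 1
        ring
      rw [e1, add_comm (1:ℂ) ε⁻¹, add_comm (a + b) ε⁻¹]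
    rw [Complex.norm_eq_abs, hfun]
    calc Complex.abs (ε⁻¹ ^ (a + b - 1) * Complex.Gamma (ε⁻¹ + 1) / Complex.Gamma (ε⁻¹ + (a + b)) - 1)
        ≤ D / Complex.abs ε⁻¹ := hkey'
      _ = D * Complex.abs ε := by rw [map_inv₀, div_inv_eq_mul]
  have h2 := hg.const_mul (-2 * π * I / (Complex.Gamma (1 - a) * Complex.Gamma (1 - b)))
  rw [mul_one] at h2
  exact h2.congr fun ε => by ring
end

section
/- Fix complex numbers a, b and fix γ ∈ (0, π/2). Define, for ε in the sector S⁺ = {ε : 0 < |ε| < r, arg(ε) ∈ (-π+γ, π-γ)}, λ⁺(ε) = (-2πi·e^{πi(1-a-b)} / (Γ(a)Γ(b))) · ε^{a+b-1} · Γ(a + b + 1/ε) / Γ(1 + 1/ε). Then lim_{ε→0, ε∈S⁺} λ⁺(ε) = -2πi·e^{πi(1-a-b)} / (Γ(a)Γ(b)). -/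
open Complex Real Filter Finset Topology

namespace StokesAux


/-- sector: z ≠ 0 and re z ≥ -cos γ * |z| -/
def sector (γ : ℝ) : Set ℂ := {z | z ≠ 0 ∧ -Real.cos γ * ‖z‖ ≤ z.re}

variable {γ : ℝ}

lemma dist_bound (hγ0 : 0 < γ) (hγ2 : γ < π/2) {z : ℂ} (hz : z ∈ sector γ)
    {t : ℝ} (ht : 0 ≤ t) :
    Real.sqrt ((1 - Real.cos γ)/2) * (‖z‖ + t) ≤ ‖(z + t)‖ := by
  obtain ⟨hz0, hre⟩ := hz
  have hZ : 0 < ‖z‖ := norm_pos_iff.mpr hz0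
  have hc1 : Real.cos γ < 1 := by
    have h := Real.strictAntiOn_cos (Set.mem_Icc.mpr ⟨le_refl 0, Real.pi_pos.le⟩)
      (Set.mem_Icc.mpr ⟨hγ0.le, by linarith [Real.pi_pos]⟩) hγ0
    simpa using h
  have hc0 : 0 < Real.cos γ := Real.cos_pos_of_mem_Ioo ⟨by linarith [Real.pi_pos], hγ2⟩
  have hk : (0:ℝ) ≤ (1 - Real.cos γ)/2 := by linarith
  have hsq : ((1 - Real.cos γ)/2) * (‖z‖ + t)^2 ≤ (‖(z + t)‖)^2 := by
    have h1 : (‖(z+t)‖)^2 = Complex.normSq (z + t) := (Complex.sq_norm _).symm ▸ rfl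
    have h2 : Complex.normSq (z + (t:ℂ)) = (z.re + t)^2 + z.im^2 := by
      simp [Complex.normSq_apply]; ring
    have h3 : z.re^2 + z.im^2 = (‖z‖)^2 := by
      rw [Complex.sq_norm, Complex.normSq_apply]; ring
    rw [Complex.sq_norm, h2]
    nlinarith [sq_nonneg (‖z‖ - t), sq_nonneg (‖z‖ + t),
      mul_nonneg ht hZ.le]
  calc Real.sqrt ((1 - Real.cos γ)/2) * (‖z‖ + t)
      = Real.sqrt (((1 - Real.cos γ)/2) * (‖z‖ + t)^2) := by
        rw [Real.sqrt_mul hk, Real.sqrt_sq (by positivity)]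
    _ ≤ Real.sqrt ((‖(z + t)‖)^2) := Real.sqrt_le_sqrt hsq
    _ = ‖(z + t)‖ := Real.sqrt_sq (norm_nonneg _)

lemma sector_shift (hγ0 : 0 < γ) (hγ2 : γ < π/2) {z : ℂ} (hz : z ∈ sector γ)
    {t : ℝ} (ht : 0 ≤ t) : (z + t) ∈ sector γ := by
  have hc1 : Real.cos γ < 1 := by
    have h := Real.strictAntiOn_cos (Set.mem_Icc.mpr ⟨le_refl 0, Real.pi_pos.le⟩)
      (Set.mem_Icc.mpr ⟨hγ0.le, by linarith [Real.pi_pos]⟩) hγ0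
    simpa using h
  have hc0 : 0 < Real.cos γ := Real.cos_pos_of_mem_Ioo ⟨by linarith [Real.pi_pos], hγ2⟩
  obtain ⟨hz0, hre⟩ := hz
  have hZ : 0 < ‖z‖ := norm_pos_iff.mpr hz0
  have hd := dist_bound hγ0 hγ2 ⟨hz0, hre⟩ ht
  have hkpos : 0 < Real.sqrt ((1 - Real.cos γ)/2) := Real.sqrt_pos.mpr (by linarith)
  constructor
  · intro h
    rw [h] at hd
    simp only [norm_zero] at hd
    nlinarith
  · have habs : ‖z‖ - t ≤ ‖(z + t)‖ := by
      have h1 : ‖z‖ ≤ ‖(z + (t:ℂ))‖ + ‖((t:ℂ))‖ := by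
        simpa using norm_add_le (z + (t:ℂ)) (-(t:ℂ))
      have h2 : ‖(t:ℂ)‖ = t := by rw [Complex.norm_of_nonneg ht]
      linarith [h1]
    have : (z + (t:ℂ)).re = z.re + t := by simp
    rw [this]
    nlinarith

lemma arg_bound (hγ0 : 0 < γ) (hγ2 : γ < π/2) {w : ℂ} (hw : w ∈ sector γ) :
    |Complex.arg w| ≤ π - γ := by
  obtain ⟨hw0, hre⟩ := hw
  have hW : 0 < ‖w‖ := norm_pos_iff.mpr hw0
  have hcos : Real.cos (π - γ) ≤ Real.cos (Complex.arg w) := by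
    rw [Real.cos_pi_sub]
    rw [Complex.cos_arg hw0]
    rw [le_div_iff₀ hW]
    linarith
  by_contra h
  push_neg at h
  have h1 : Real.cos |Complex.arg w| < Real.cos (π - γ) := by
    apply Real.strictAntiOn_cos ⟨by linarith [Real.pi_pos], by linarith⟩
      ⟨abs_nonneg _, Complex.abs_arg_le_pi w⟩ h
  rw [Real.cos_abs] at h1
  linarith

lemma arg_one_add_small {u : ℂ} (hu : ‖u‖ ≤ 1/2) :
    |Complex.arg (1 + u)| ≤ (3/2) * ‖u‖ := by
  have h := Complex.norm_log_one_add_half_le_self (z := u) (by exact hu)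
  calc |Complex.arg (1 + u)| = |(Complex.log (1 + u)).im| := by rw [Complex.log_im]
    _ ≤ ‖(Complex.log (1 + u))‖ := Complex.abs_im_le_norm _
    _ ≤ (3/2) * ‖u‖ := h

lemma log_sub_log {w v : ℂ} (hw : w ≠ 0) (hv : v ≠ 0)
    (harg : |Complex.arg v - Complex.arg w| < π) :
    Complex.log v - Complex.log w = Complex.log (v / w) := by
  set d := Complex.log v - Complex.log w - Complex.log (v / w) with hd
  have hvw : v / w ≠ 0 := div_ne_zero hv hw
  have hexp : Complex.exp d = 1 := by
    rw [hd, Complex.exp_sub, Complex.exp_sub, Complex.exp_log hv, Complex.exp_log hw,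
      Complex.exp_log hvw]
    field_simp
  obtain ⟨n, hn⟩ := Complex.exp_eq_one_iff.mp hexp
  have him : d.im = n * (2 * π) := by
    rw [hn]; simp [Complex.mul_im]
  have him2 : d.im = Complex.arg v - Complex.arg w - Complex.arg (v / w) := by
    rw [hd]; simp [Complex.log_im]
  have hb : |d.im| < 2 * π := by
    rw [him2]
    have h1 : |Complex.arg (v / w)| ≤ π := Complex.abs_arg_le_pi _
    have := abs_sub (Complex.arg v - Complex.arg w) (Complex.arg (v / w))
    calc |Complex.arg v - Complex.arg w - Complex.arg (v / w)|
        ≤ |Complex.arg v - Complex.arg w| + |Complex.arg (v / w)| := abs_sub _ _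
      _ < π + π := by linarith [lt_of_le_of_lt (le_refl _) harg]
      _ = 2 * π := by ring
  have hn0 : n = 0 := by
    by_contra hne
    have : (1:ℝ) ≤ |(n:ℝ)| := by
      rw [← Int.cast_abs]
      exact_mod_cast Int.one_le_abs hne
    rw [him] at hb
    rw [abs_mul] at hb
    have hπ : (0:ℝ) < 2 * π := by positivity
    rw [abs_of_pos hπ] at hb
    nlinarith
  rw [hn0, Int.cast_zero, zero_mul] at hn
  have h0 : Complex.log v - Complex.log w - Complex.log (v/w) = 0 := hn
  linear_combination h0


lemma re_pos_of_im_eq_zero (hγ0 : 0 < γ) (hγ2 : γ < π/2) {z : ℂ}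
    (hz : z ∈ sector γ) (him : z.im = 0) : 0 < z.re := by
  obtain ⟨hz0, hre⟩ := hz
  have hc1 : Real.cos γ < 1 := by
    have h := Real.strictAntiOn_cos (Set.mem_Icc.mpr ⟨le_refl 0, Real.pi_pos.le⟩)
      (Set.mem_Icc.mpr ⟨hγ0.le, by linarith [Real.pi_pos]⟩) hγ0
    simpa using h
  have habs : ‖z‖ = |z.re| := by
    have hzz : z = (z.re : ℂ) := Complex.ext rfl (by simp [him])
    nth_rewrite 1 [hzz]
    exact Complex.norm_real _
  rcases lt_trichotomy z.re 0 with h | h | h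
  · rw [habs, abs_of_neg h] at hre
    nlinarith
  · exfalso; exact hz0 (Complex.ext h (by simp [him]))
  · exact h

lemma arg_diff_lt (hγ0 : 0 < γ) (hγ2 : γ < π/2) {z : ℂ} (hz : z ∈ sector γ)
    {t : ℝ} (ht : 0 ≤ t) : |Complex.arg (z + t) - Complex.arg z| < π := by
  have hz' : z + (t:ℂ) ∈ sector γ := sector_shift hγ0 hγ2 hz ht
  have hzn : z ≠ 0 := hz.1
  have hzn' : z + (t:ℂ) ≠ 0 := hz'.1
  have him : (z + (t:ℂ)).im = z.im := by simp
  rcases lt_trichotomy z.im 0 with h | h | h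
  · -- both args in (-π, 0)
    have h1 : Complex.arg z < 0 := Complex.arg_neg_iff.mpr h
    have h2 : Complex.arg (z + t) < 0 := Complex.arg_neg_iff.mpr (by rw [him]; exact h)
    have h3 : -π < Complex.arg z := Complex.neg_pi_lt_arg z
    have h4 : -π < Complex.arg (z + t) := Complex.neg_pi_lt_arg _
    rw [abs_lt]; constructor <;> linarith
  · -- z real positive
    have hre : 0 < z.re := re_pos_of_im_eq_zero hγ0 hγ2 hz h
    have h1 : Complex.arg z = 0 := Complex.arg_eq_zero_iff.mpr ⟨hre.le, h⟩
    have h2 : Complex.arg (z + t) = 0 := by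
      apply Complex.arg_eq_zero_iff.mpr
      constructor
      · simp only [Complex.add_re, Complex.ofReal_re]; linarith
      · rw [him]; exact h
    rw [h1, h2]; simpa using Real.pi_pos
  · -- both args in (0, π)
    have h1 : 0 < Complex.arg z := by
      rcases (Complex.arg_nonneg_iff.mpr h.le).lt_or_eq with h' | h'
      · exact h'
      · exfalso
        have := Complex.arg_eq_zero_iff.mp h'.symm
        exact (ne_of_gt h) this.2
    have h2 : 0 < Complex.arg (z + t) := by
      have himt : 0 < (z + (t:ℂ)).im := by rw [him]; exact h
      rcases (Complex.arg_nonneg_iff.mpr himt.le).lt_or_eq with h' | h'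
      · exact h'
      · exfalso
        have := Complex.arg_eq_zero_iff.mp h'.symm
        exact (ne_of_gt himt) this.2
    have h3 : Complex.arg z < π := by
      rcases (Complex.arg_le_pi z).lt_or_eq with h' | h'
      · exact h'
      · exact absurd (Complex.arg_eq_pi_iff.mp h').2 (ne_of_gt h)
    have h4 : Complex.arg (z + t) < π := by
      rcases (Complex.arg_le_pi _).lt_or_eq with h' | h'
      · exact h'
      · exact absurd (Complex.arg_eq_pi_iff.mp h').2 (by rw [him]; exact ne_of_gt h)
    rw [abs_lt]; constructor <;> linarith

lemma log_taylor_bound {w : ℂ} (h : ‖w‖ ≤ 1/2) :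
    ‖(Complex.log (1 + w) - w)‖ ≤ (‖w‖)^2 := by
  have h1 : ‖w‖ < 1 := by linarith
  have := Complex.norm_log_one_add_sub_self_le h1
  have h2 : (1 - ‖w‖)⁻¹ ≤ 2 := by
    rw [inv_le_comm₀ (by linarith) (by norm_num)]
    linarith
  calc ‖(Complex.log (1 + w) - w)‖
      ≤ (‖w‖)^2 * (1 - ‖w‖)⁻¹ / 2 := this
    _ ≤ (‖w‖)^2 * 2 / 2 := by gcongr
    _ = (‖w‖)^2 := by ring

lemma telescope (hγ0 : 0 < γ) (hγ2 : γ < π/2) {z : ℂ} (hz : z ∈ sector γ)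
    (hne : ∀ j : ℕ, z + 1 + j ≠ 0)
    (hsm : ∀ j : ℕ, (3/2) * (‖(z+1+j)‖)⁻¹ < γ)
    (hhalf : ∀ j : ℕ, (‖(z+1+j)‖)⁻¹ ≤ 1/2) :
    ∀ n : ℕ, ∑ j ∈ range n, Complex.log (1 + (z+1+j)⁻¹)
      = Complex.log (z+1+n) - Complex.log (z+1) := by
  intro n
  induction n with
  | zero => simp
  | succ n ih =>
    rw [Finset.sum_range_succ, ih]
    have hw : z + 1 + (n:ℂ) ≠ 0 := hne n
    have hwmem : z + 1 + (n:ℂ) ∈ sector γ := by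
      have h := sector_shift hγ0 hγ2 hz (t := 1 + (n:ℝ)) (by positivity)
      have e : z + (((1 + (n:ℝ)) : ℝ) : ℂ) = z + 1 + (n:ℂ) := by push_cast; ring
      rwa [e] at h
    set u : ℂ := (z + 1 + (n:ℂ))⁻¹ with hu
    have huabs : ‖u‖ ≤ 1/2 := by rw [hu, norm_inv]; exact hhalf n
    have h1u : (1 : ℂ) + u ≠ 0 := by
      intro hcon
      have hu1 : u = -1 := by linear_combination hcon
      rw [hu1] at huabs
      simp at huabs
      linarith
    have key : Complex.log (z + 1 + ((n:ℂ)+1)) =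
        Complex.log (z + 1 + (n:ℂ)) + Complex.log (1 + u) := by
      have hmul : z + 1 + ((n:ℂ)+1) = (z + 1 + (n:ℂ)) * (1 + u) := by
        rw [hu]; field_simp; ring
      rw [hmul]
      apply Complex.log_mul hw h1u
      have ha1 : |Complex.arg (z + 1 + (n:ℂ))| ≤ π - γ := arg_bound hγ0 hγ2 hwmem
      have ha2 : |Complex.arg (1 + u)| ≤ (3/2) * ‖u‖ := arg_one_add_small huabs
      have ha3 : (3/2) * ‖u‖ < γ := by
        rw [hu, norm_inv]; exact hsm n
      constructor
      · have := abs_lt.mp (lt_of_le_of_lt ha2 ha3)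
        have := abs_le.mp ha1
        linarith
      · have := abs_lt.mp (lt_of_le_of_lt ha2 ha3)
        have := abs_le.mp ha1
        linarith
    push_cast
    rw [key]
    ring

lemma aux_num {t : ℝ} (ht : 0 ≤ t) : (2*t)^2 + t + 2*t^2 ≤ 8*(t+1)^2 := by nlinarith

lemma aux_mul_sq {a b : ℝ} (h1 : 0 ≤ a) (h2 : a ≤ b) : a*b ≤ b^2 := by nlinarith

set_option maxHeartbeats 2000000 in
lemma key (s : ℂ) (hγ0 : 0 < γ) (hγ2 : γ < π/2) :
    ∃ C : ℝ, 0 < C ∧ ∃ R : ℝ, 1 ≤ R ∧ ∀ z : ℂ, z ∈ sector γ → R ≤ ‖z‖ →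
      ‖(z ^ (1-s) * Complex.Gamma (z+s) / Complex.Gamma (z+1) - 1)‖
        ≤ C / ‖z‖ := by
  have hc1 : Real.cos γ < 1 := by
    have h := Real.strictAntiOn_cos (Set.mem_Icc.mpr ⟨le_refl 0, Real.pi_pos.le⟩)
      (Set.mem_Icc.mpr ⟨hγ0.le, by linarith [Real.pi_pos]⟩) hγ0
    simpa using h
  set c := Real.sqrt ((1 - Real.cos γ)/2) with hcdef
  have hc : 0 < c := Real.sqrt_pos.mpr (by linarith)
  set σ := ‖(s - 1)‖ with hσdef
  have hσ : 0 ≤ σ := norm_nonneg _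
  obtain ⟨D, hD, hDpos⟩ : ∃ D : ℝ, D = 8 * (σ+1)^2 / c^2 ∧ 0 < D :=
    ⟨_, rfl, by positivity⟩
  obtain ⟨E, hE, hEpos⟩ : ∃ E : ℝ, E = 2*σ + D + 1 ∧ 0 < E :=
    ⟨_, rfl, by positivity⟩
  refine ⟨2*E, by positivity, 2 + 2*E + (2+4*σ)/c + 3/(c*γ) + 2/c, ?_, ?_⟩
  · have hp1 : (0:ℝ) ≤ 2*E := by positivity
    have hp2 : (0:ℝ) ≤ (2+4*σ)/c := by positivity
    have hp3 : (0:ℝ) ≤ 3/(c*γ) := by positivity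
    have hp4 : (0:ℝ) ≤ 2/c := by positivity
    linarith
  intro z hz hZR
  set Z := ‖z‖ with hZdef
  have hz0 : z ≠ 0 := hz.1
  have hp1 : (0:ℝ) ≤ 2*E := by positivity
  have hp2 : (0:ℝ) ≤ (2+4*σ)/c := by positivity
  have hp3 : (0:ℝ) ≤ 3/(c*γ) := by positivity
  have hp4 : (0:ℝ) ≤ 2/c := by positivity
  have hZ2 : (2:ℝ) ≤ Z := by linarith
  have hZpos : (0:ℝ) < Z := by linarith
  have hr1 : 2 + 4*σ ≤ Z*c := (div_le_iff₀ hc).mp (by linarith)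
  have hr1' : 2 + 4*σ ≤ c*Z := by linarith [mul_comm Z c ▸ hr1]
  have hr2 : 3 ≤ Z*(c*γ) := (div_le_iff₀ (by positivity)).mp (by linarith)
  have hr3 : 2*E ≤ Z := by linarith
  have hcZ : 0 < c*Z := by positivity
  -- per-j lower bounds
  have hAabs : ∀ j:ℕ, c * (Z + ((j:ℝ)+1)) ≤ ‖(z+1+(j:ℂ))‖ := by
    intro j
    have h := dist_bound hγ0 hγ2 hz (t := 1+(j:ℝ)) (by positivity)
    have e : z + (((1+(j:ℝ)):ℝ):ℂ) = z+1+(j:ℂ) := by push_cast; ring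
    rw [e] at h
    have e2 : c * (Z + ((j:ℝ)+1)) = c * (Z + (1+(j:ℝ))) := by ring
    rw [e2]; exact h
  have hcZA : ∀ j:ℕ, c*Z ≤ ‖(z+1+(j:ℂ))‖ := by
    intro j
    refine le_trans ?_ (hAabs j)
    have h0 : (0:ℝ) ≤ (j:ℝ)+1 := by positivity
    exact mul_le_mul_of_nonneg_left (by linarith) hc.le
  have hApos : ∀ j:ℕ, 0 < ‖(z+1+(j:ℂ))‖ := fun j =>
    lt_of_lt_of_le (by positivity) (hAabs j)
  have hAne : ∀ j:ℕ, z+1+(j:ℂ) ≠ 0 := fun j => by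
    intro h; have := hApos j; rw [h] at this; simp at this
  have habs1s : ‖(1-s)‖ = σ := by rw [hσdef, norm_sub_rev]
  have hBabs : ∀ j:ℕ, c/2 * (Z + ((j:ℝ)+1)) ≤ ‖(z+s+(j:ℂ))‖ := by
    intro j
    have h1 : ‖(z+1+(j:ℂ))‖ ≤ ‖(z+s+(j:ℂ))‖ + σ := by
      calc ‖(z+1+(j:ℂ))‖ = ‖((z+s+(j:ℂ)) + (1-s))‖ := by ring_nf
        _ ≤ ‖(z+s+(j:ℂ))‖ + ‖(1-s)‖ := norm_add_le _ _
        _ = ‖(z+s+(j:ℂ))‖ + σ := by rw [habs1s]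
    have h2 := hAabs j
    have h3 : σ ≤ c/2 * (Z + ((j:ℝ)+1)) := by
      have e : c/2 * (Z + ((j:ℝ)+1)) = c * (Z + ((j:ℝ)+1))/2 := by ring
      have h7 : c*Z ≤ c * (Z + ((j:ℝ)+1)) :=
        mul_le_mul_of_nonneg_left (by linarith [Nat.cast_nonneg (α := ℝ) j]) hc.le
      rw [e]
      linarith
    linarith
  have hBpos : ∀ j:ℕ, 0 < ‖(z+s+(j:ℂ))‖ := fun j =>
    lt_of_lt_of_le (by positivity) (hBabs j)
  have hBne : ∀ j:ℕ, z+s+(j:ℂ) ≠ 0 := fun j => by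
    intro h; have := hBpos j; rw [h] at this; simp at this
  have hhalf : ∀ j:ℕ, (‖(z+1+(j:ℂ))‖)⁻¹ ≤ 1/2 := by
    intro j
    rw [inv_le_comm₀ (hApos j) (by norm_num)]
    have := hcZA j
    norm_num
    linarith
  have hsm : ∀ j:ℕ, (3/2) * (‖(z+1+(j:ℂ))‖)⁻¹ < γ := by
    intro j
    rw [← div_eq_mul_inv, div_lt_iff₀ (hApos j)]
    have h5 := hcZA j
    have h6 : γ*(c*Z) ≤ γ*‖(z+1+(j:ℂ))‖ := mul_le_mul_of_nonneg_left h5 hγ0.le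
    have e : γ*(c*Z) = Z*(c*γ) := by ring
    linarith
  -- Gamma (z+1) ≠ 0
  have hGne : Complex.Gamma (z+1) ≠ 0 := by
    apply Complex.Gamma_ne_zero
    intro m h
    have hzeq : z = -(1+(m:ℂ)) := by linear_combination h
    have him : z.im = 0 := by rw [hzeq]; simp
    have hre := re_pos_of_im_eq_zero hγ0 hγ2 hz him
    rw [hzeq] at hre
    simp only [Complex.neg_re, Complex.add_re, Complex.one_re, Complex.natCast_re] at hre
    have : (0:ℝ) ≤ (m:ℝ) := Nat.cast_nonneg m
    linarith
  -- Euler sequence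
  have hGs := Complex.GammaSeq_tendsto_Gamma (z+s)
  have hG1 := Complex.GammaSeq_tendsto_Gamma (z+1)
  have hQlim : Tendsto (fun n => z^(1-s) * Complex.GammaSeq (z+s) n / Complex.GammaSeq (z+1) n)
      atTop (𝓝 (z^(1-s) * Complex.Gamma (z+s) / Complex.Gamma (z+1))) :=
    (Tendsto.mul tendsto_const_nhds hGs).div hG1 hGne
  obtain ⟨L, hL⟩ : ∃ L : ℕ → ℂ, ∀ n, L n = Complex.log z * (1-s) + Complex.log (n:ℂ) * (s-1)
      + ∑ j ∈ range (n+1), Complex.log ((z+1+(j:ℂ))/(z+s+(j:ℂ))) := ⟨_, fun _ => rfl⟩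
  have hQexp : ∀ n:ℕ, n ≠ 0 →
      z^(1-s) * Complex.GammaSeq (z+s) n / Complex.GammaSeq (z+1) n = Complex.exp (L n) := by
    intro n hn
    have hnc : (n:ℂ) ≠ 0 := Nat.cast_ne_zero.mpr hn
    have hfact : ((n.factorial : ℕ):ℂ) ≠ 0 := Nat.cast_ne_zero.mpr n.factorial_ne_zero
    have hpA : ∏ j ∈ range (n+1), (z+1+(j:ℂ)) ≠ 0 :=
      Finset.prod_ne_zero_iff.mpr (fun j _ => hAne j)
    have hpB : ∏ j ∈ range (n+1), (z+s+(j:ℂ)) ≠ 0 :=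
      Finset.prod_ne_zero_iff.mpr (fun j _ => hBne j)
    have hX : (n:ℂ)^(z+1) ≠ 0 := by
      simp [Complex.cpow_eq_zero_iff, hnc]
    have hcpow : (n:ℂ)^(z+s) = (n:ℂ)^(z+1) * (n:ℂ)^(s-1) := by
      rw [← Complex.cpow_add _ _ hnc]; ring_nf
    have hrhs : Complex.exp (L n)
        = z^(1-s) * ((n:ℂ)^(s-1) * ∏ j ∈ range (n+1), ((z+1+(j:ℂ))/(z+s+(j:ℂ)))) := by
      rw [hL n, Complex.exp_add, Complex.exp_add, Complex.exp_sum, mul_assoc]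
      congr 1
      · exact (Complex.cpow_def_of_ne_zero hz0 _).symm
      congr 1
      · exact (Complex.cpow_def_of_ne_zero hnc _).symm
      · exact Finset.prod_congr rfl fun j _ => Complex.exp_log (div_ne_zero (hAne j) (hBne j))
    rw [hrhs, Complex.GammaSeq, Complex.GammaSeq, hcpow, Finset.prod_div_distrib]
    field_simp
  have htel := telescope hγ0 hγ2 hz hAne hsm hhalf
  have hLdec : ∀ n : ℕ, L n =
      (Complex.log (n:ℂ) - Complex.log z - Complex.log (z+1+((n+1:ℕ):ℂ))
        + Complex.log (z+1)) * (s-1)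
      + ∑ j ∈ range (n+1), (Complex.log ((z+1+(j:ℂ))/(z+s+(j:ℂ)))
          + (s-1) * Complex.log (1 + (z+1+(j:ℂ))⁻¹)) := by
    intro n
    rw [hL n, Finset.sum_add_distrib, ← Finset.mul_sum, htel (n+1)]
    ring
  -- per-term bound
  have hterm : ∀ j : ℕ, ‖(Complex.log ((z+1+(j:ℂ))/(z+s+(j:ℂ)))
      + (s-1) * Complex.log (1 + (z+1+(j:ℂ))⁻¹))‖
      ≤ D * ((Z+(j:ℝ))⁻¹ - (Z+((j+1:ℕ):ℝ))⁻¹) := by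
    intro j
    push_cast
    have hWpos : (0:ℝ) < Z + ((j:ℝ)+1) := by positivity
    have hZj : (0:ℝ) < Z + (j:ℝ) := by positivity
    have hA := hAabs j
    have hB := hBabs j
    have hApos' := hApos j
    have hBpos' := hBpos j
    have hA0 := hAne j
    have hB0 := hBne j
    have hcW : (0:ℝ) < c * (Z + ((j:ℝ)+1)) := by positivity
    have hjnn : (0:ℝ) ≤ (j:ℝ) := Nat.cast_nonneg j
    have hZW : c*Z ≤ c * (Z + ((j:ℝ)+1)) := mul_le_mul_of_nonneg_left (by linarith) hc.le
    have h4σ : 4*σ ≤ c * (Z + ((j:ℝ)+1)) := by linarith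
    have habsu : ‖((z+1+(j:ℂ))⁻¹)‖ ≤ (c*(Z+((j:ℝ)+1)))⁻¹ := by
      rw [norm_inv]
      exact inv_anti₀ hcW hA
    have habsu12 : ‖((z+1+(j:ℂ))⁻¹)‖ ≤ 1/2 := by rw [norm_inv]; exact hhalf j
    have habsv : ‖((1-s)/(z+s+(j:ℂ)))‖ ≤ 2*σ/(c*(Z+((j:ℝ)+1))) := by
      rw [norm_div, habs1s]
      have h1 : σ / ‖(z+s+(j:ℂ))‖ ≤ σ / (c/2*(Z+((j:ℝ)+1))) := by
        apply div_le_div_of_nonneg_left hσ (by positivity) hB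
      have h2 : σ / (c/2*(Z+((j:ℝ)+1))) = 2*σ/(c*(Z+((j:ℝ)+1))) := by
        rw [div_eq_div_iff (by positivity) (by positivity)]
        ring
      linarith
    have habsv12 : ‖((1-s)/(z+s+(j:ℂ)))‖ ≤ 1/2 := by
      refine le_trans habsv ?_
      rw [div_le_iff₀ hcW]
      linarith
    have hABdiv : (z+1+(j:ℂ))/(z+s+(j:ℂ)) = 1 + (1-s)/(z+s+(j:ℂ)) := by
      field_simp
      ring
    have hvu : (1-s)/(z+s+(j:ℂ)) + (s-1)*(z+1+(j:ℂ))⁻¹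
        = (1-s)^2 * ((z+1+(j:ℂ))*(z+s+(j:ℂ)))⁻¹ := by
      field_simp [hA0, hB0]
      ring
    have hdecomp : Complex.log ((z+1+(j:ℂ))/(z+s+(j:ℂ)))
        + (s-1) * Complex.log (1 + (z+1+(j:ℂ))⁻¹)
        = (Complex.log (1 + (1-s)/(z+s+(j:ℂ))) - (1-s)/(z+s+(j:ℂ)))
          + (s-1)*(Complex.log (1 + (z+1+(j:ℂ))⁻¹) - (z+1+(j:ℂ))⁻¹)
          + (1-s)^2 * ((z+1+(j:ℂ))*(z+s+(j:ℂ)))⁻¹ := by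
      rw [hABdiv]
      linear_combination hvu
    rw [hdecomp]
    have t1 := log_taylor_bound habsv12
    have t2 := log_taylor_bound habsu12
    have t3 : ‖((1-s)^2 * ((z+1+(j:ℂ))*(z+s+(j:ℂ)))⁻¹)‖
        = σ^2 * (‖(z+1+(j:ℂ))‖ * ‖(z+s+(j:ℂ))‖)⁻¹ := by
      rw [norm_mul, norm_pow, habs1s, norm_inv, norm_mul]
    have hb1 : (‖((1-s)/(z+s+(j:ℂ)))‖)^2 ≤ (2*σ)^2/(c*(Z+((j:ℝ)+1)))^2 := by
      calc (‖((1-s)/(z+s+(j:ℂ)))‖)^2 ≤ (2*σ/(c*(Z+((j:ℝ)+1))))^2 :=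
            pow_le_pow_left₀ (norm_nonneg _) habsv 2
        _ = (2*σ)^2/(c*(Z+((j:ℝ)+1)))^2 := div_pow _ _ 2
    have hb2 : (‖((z+1+(j:ℂ))⁻¹)‖)^2 ≤ ((c*(Z+((j:ℝ)+1)))^2)⁻¹ := by
      calc (‖((z+1+(j:ℂ))⁻¹)‖)^2 ≤ ((c*(Z+((j:ℝ)+1)))⁻¹)^2 :=
            pow_le_pow_left₀ (norm_nonneg _) habsu 2
        _ = ((c*(Z+((j:ℝ)+1)))^2)⁻¹ := inv_pow _ 2
    have hb3 : σ^2 * (‖(z+1+(j:ℂ))‖ * ‖(z+s+(j:ℂ))‖)⁻¹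
        ≤ 2*σ^2/(c*(Z+((j:ℝ)+1)))^2 := by
      have hm : c*(Z+((j:ℝ)+1)) * (c/2*(Z+((j:ℝ)+1)))
          ≤ ‖(z+1+(j:ℂ))‖ * ‖(z+s+(j:ℂ))‖ :=
        mul_le_mul hA hB (by positivity) (norm_nonneg _)
      have h1 : σ^2 * (‖(z+1+(j:ℂ))‖ * ‖(z+s+(j:ℂ))‖)⁻¹
          ≤ σ^2 * (c*(Z+((j:ℝ)+1)) * (c/2*(Z+((j:ℝ)+1))))⁻¹ :=
        mul_le_mul_of_nonneg_left (inv_anti₀ (by positivity) hm) (by positivity)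
      have h2 : σ^2 * (c*(Z+((j:ℝ)+1)) * (c/2*(Z+((j:ℝ)+1))))⁻¹
          = 2*σ^2/(c*(Z+((j:ℝ)+1)))^2 := by
        rw [mul_inv_eq_iff_eq_mul₀ (by positivity)]
        rw [div_mul_eq_mul_div, eq_div_iff (by positivity)]
        ring
      linarith
    have e1 : ‖((s-1)*(Complex.log (1 + (z+1+(j:ℂ))⁻¹) - (z+1+(j:ℂ))⁻¹))‖
        = σ * ‖(Complex.log (1 + (z+1+(j:ℂ))⁻¹) - (z+1+(j:ℂ))⁻¹)‖ := by
      rw [norm_mul, ← hσdef]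
    have hmid : σ * ‖(Complex.log (1 + (z+1+(j:ℂ))⁻¹) - (z+1+(j:ℂ))⁻¹)‖
        ≤ σ * ((c*(Z+((j:ℝ)+1)))^2)⁻¹ :=
      mul_le_mul_of_nonneg_left (le_trans t2 hb2) hσ
    have habssum : ‖((Complex.log (1 + (1-s)/(z+s+(j:ℂ))) - (1-s)/(z+s+(j:ℂ)))
          + (s-1)*(Complex.log (1 + (z+1+(j:ℂ))⁻¹) - (z+1+(j:ℂ))⁻¹)
          + (1-s)^2 * ((z+1+(j:ℂ))*(z+s+(j:ℂ)))⁻¹)‖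
        ≤ ((2*σ)^2 + σ + 2*σ^2)/(c*(Z+((j:ℝ)+1)))^2 := by
      have step1 : ‖((Complex.log (1 + (1-s)/(z+s+(j:ℂ))) - (1-s)/(z+s+(j:ℂ)))
            + (s-1)*(Complex.log (1 + (z+1+(j:ℂ))⁻¹) - (z+1+(j:ℂ))⁻¹)
            + (1-s)^2 * ((z+1+(j:ℂ))*(z+s+(j:ℂ)))⁻¹)‖
          ≤ ‖(Complex.log (1 + (1-s)/(z+s+(j:ℂ))) - (1-s)/(z+s+(j:ℂ)))‖
            + ‖((s-1)*(Complex.log (1 + (z+1+(j:ℂ))⁻¹) - (z+1+(j:ℂ))⁻¹))‖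
            + ‖((1-s)^2 * ((z+1+(j:ℂ))*(z+s+(j:ℂ)))⁻¹)‖ := by
        refine le_trans (norm_add_le _ _) ?_
        exact add_le_add_left (norm_add_le _ _) _
      rw [e1, t3] at step1
      have hfinal : (2*σ)^2/(c*(Z+((j:ℝ)+1)))^2 + σ * ((c*(Z+((j:ℝ)+1)))^2)⁻¹
            + 2*σ^2/(c*(Z+((j:ℝ)+1)))^2
          = ((2*σ)^2 + σ + 2*σ^2)/(c*(Z+((j:ℝ)+1)))^2 := by
        field_simp
      have := add_le_add (add_le_add (le_trans t1 hb1) hmid) hb3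
      linarith
    refine le_trans habssum ?_
    have hWD : ((2*σ)^2 + σ + 2*σ^2)/(c*(Z+((j:ℝ)+1)))^2 ≤ D/(Z+((j:ℝ)+1))^2 := by
      rw [hD, div_div, ← mul_pow]
      gcongr
      exact aux_num hσ
    refine le_trans hWD ?_
    have hfe : (Z+(j:ℝ))⁻¹ - (Z+((j:ℝ)+1))⁻¹ = ((Z+(j:ℝ))*(Z+((j:ℝ)+1)))⁻¹ := by
      rw [inv_sub_inv (ne_of_gt hZj) (ne_of_gt hWpos)]
      congr 1
      ring
    have hmm : (Z+(j:ℝ))*(Z+((j:ℝ)+1)) ≤ (Z+((j:ℝ)+1))^2 :=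
      aux_mul_sq hZj.le (by linarith)
    calc D/(Z+((j:ℝ)+1))^2 = D * ((Z+((j:ℝ)+1))^2)⁻¹ := div_eq_mul_inv _ _
      _ ≤ D * ((Z+(j:ℝ))*(Z+((j:ℝ)+1)))⁻¹ :=
          mul_le_mul_of_nonneg_left (inv_anti₀ (by positivity) hmm) hDpos.le
      _ = D * ((Z+(j:ℝ))⁻¹ - (Z+((j:ℝ)+1))⁻¹) := by rw [hfe]
  -- sum bound
  have hsum : ∀ n : ℕ, ‖(∑ j ∈ range (n+1), (Complex.log ((z+1+(j:ℂ))/(z+s+(j:ℂ)))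
      + (s-1) * Complex.log (1 + (z+1+(j:ℂ))⁻¹)))‖ ≤ D / Z := by
    intro n
    refine le_trans (norm_sum_le _ _) ?_
    refine le_trans (Finset.sum_le_sum (fun j _ => hterm j)) ?_
    rw [← Finset.mul_sum]
    have htsum : ∑ j ∈ range (n+1), ((Z+(j:ℝ))⁻¹ - (Z+((j+1:ℕ):ℝ))⁻¹)
        = (Z+((0:ℕ):ℝ))⁻¹ - (Z+((n+1:ℕ):ℝ))⁻¹ :=
      Finset.sum_range_sub' (fun j : ℕ => (Z+(j:ℝ))⁻¹) (n+1)
    rw [htsum]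
    have h0 : (Z+((0:ℕ):ℝ))⁻¹ = Z⁻¹ := by norm_num
    have h1 : (0:ℝ) ≤ (Z+((n+1:ℕ):ℝ))⁻¹ := by positivity
    rw [h0, div_eq_mul_inv]
    have h2 : Z⁻¹ - (Z+((n+1:ℕ):ℝ))⁻¹ ≤ Z⁻¹ := by linarith
    exact mul_le_mul_of_nonneg_left h2 hDpos.le
  -- bracket pieces
  have hz1ne : z+1 ≠ 0 := by
    have := hAne 0
    simpa using this
  have hbr0 : ‖(Complex.log (z+1) - Complex.log z)‖ ≤ 2/Z := by
    have hd := arg_diff_lt hγ0 hγ2 hz (t := 1) (by norm_num)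
    have e1 : z + ((1:ℝ):ℂ) = z+1 := by norm_num
    rw [e1] at hd
    rw [log_sub_log hz0 hz1ne hd]
    have e2 : (z+1)/z = 1 + z⁻¹ := by
      field_simp
    rw [e2]
    have habs2 : ‖(z⁻¹)‖ ≤ 1/2 := by
      rw [norm_inv, inv_le_comm₀ (by rw [← hZdef]; exact hZpos) (by norm_num), ← hZdef]
      norm_num
      linarith
    have h3 := Complex.norm_log_one_add_half_le_self (z := z⁻¹)
        habs2
    rw [norm_inv, ← hZdef] at h3
    have h4 : (3/2) * Z⁻¹ ≤ 2/Z := by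
      rw [div_eq_mul_inv (2:ℝ) Z]
      have h5 : (0:ℝ) ≤ Z⁻¹ := by positivity
      linarith
    exact le_trans h3 h4
  have habsneg : ∀ x : ℂ, ‖(-x)‖ = ‖x‖ := by
    intro x
    have := norm_mul (-1) x
    simpa using this
  have hlogn : ∀ n:ℕ, n ≠ 0 → Complex.log ((n:ℕ):ℂ) - Complex.log (z+1+((n+1:ℕ):ℂ))
      = - Complex.log ((z+1+((n+1:ℕ):ℂ))/((n:ℕ):ℂ)) := by
    intro n hn
    have hnc : ((n:ℕ):ℂ) ≠ 0 := Nat.cast_ne_zero.mpr hn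
    have hnR : (0:ℝ) < (n:ℝ) := by exact_mod_cast Nat.pos_of_ne_zero hn
    have hAn1 : z+1+((n+1:ℕ):ℂ) ≠ 0 := hAne (n+1)
    have hmul : (((n:ℝ)):ℂ) * ((z+1+((n+1:ℕ):ℂ))/((n:ℕ):ℂ)) = z+1+((n+1:ℕ):ℂ) := by
      push_cast
      field_simp
    have hlm := Complex.log_ofReal_mul hnR (div_ne_zero hAn1 hnc)
    rw [hmul] at hlm
    rw [hlm, ← Complex.natCast_log]
    ring
  -- tendsto facts
  have hinv : Tendsto (fun n:ℕ => (((n:ℕ):ℂ))⁻¹) atTop (𝓝 0) := by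
    have h1 : Tendsto (fun n:ℕ => ((n:ℝ))⁻¹) atTop (𝓝 0) :=
      tendsto_inv_atTop_nhds_zero_nat
    have h2 := (Complex.continuous_ofReal.tendsto 0).comp h1
    rw [Complex.ofReal_zero] at h2
    exact h2.congr fun n => by simp [Function.comp]
  have hquot : Tendsto (fun n:ℕ => Complex.log ((z+1+((n+1:ℕ):ℂ))/((n:ℕ):ℂ))) atTop (𝓝 0) := by
    have h2 : Tendsto (fun n:ℕ => 1 + (z+2) * (((n:ℕ):ℂ))⁻¹) atTop (𝓝 (1 + (z+2)*0)) :=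
      (hinv.const_mul (z+2)).const_add 1
    rw [show (1:ℂ) + (z+2)*0 = 1 by ring] at h2
    have hcont : ContinuousAt Complex.log 1 :=
      continuousAt_clog (Or.inl (by norm_num))
    have h5 : Tendsto (fun n:ℕ => Complex.log (1 + (z+2)*(((n:ℕ):ℂ))⁻¹)) atTop (𝓝 0) := by
      have h6 := hcont.tendsto.comp h2
      simpa [Function.comp_def] using h6
    refine h5.congr' ?_
    filter_upwards [eventually_ne_atTop 0] with n hn
    have hnc : ((n:ℕ):ℂ) ≠ 0 := Nat.cast_ne_zero.mpr hn
    congr 1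
    push_cast
    field_simp
    ring
  have htn : Tendsto (fun n:ℕ => ‖(Complex.log ((z+1+((n+1:ℕ):ℂ))/((n:ℕ):ℂ)))‖)
      atTop (𝓝 0) := by
    have h6 := (continuous_norm.tendsto 0).comp hquot
    simpa [Function.comp_def] using h6
  -- bound on L
  have hLb : ∀ n:ℕ, n ≠ 0 → ‖(L n)‖
      ≤ σ * ‖(Complex.log ((z+1+((n+1:ℕ):ℂ))/((n:ℕ):ℂ)))‖ + (2*σ + D)/Z := by
    intro n hn
    rw [hLdec n]
    have hbr : ‖(Complex.log ((n:ℕ):ℂ) - Complex.log z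
          - Complex.log (z+1+((n+1:ℕ):ℂ)) + Complex.log (z+1))‖
        ≤ ‖(Complex.log ((z+1+((n+1:ℕ):ℂ))/((n:ℕ):ℂ)))‖ + 2/Z := by
      have e : Complex.log ((n:ℕ):ℂ) - Complex.log z - Complex.log (z+1+((n+1:ℕ):ℂ))
            + Complex.log (z+1)
          = (Complex.log ((n:ℕ):ℂ) - Complex.log (z+1+((n+1:ℕ):ℂ)))
            + (Complex.log (z+1) - Complex.log z) := by ring
      rw [e, hlogn n hn]
      refine le_trans (norm_add_le _ _) ?_
      rw [habsneg]
      exact add_le_add (le_refl _) hbr0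
    calc ‖_‖
        ≤ ‖((Complex.log ((n:ℕ):ℂ) - Complex.log z
            - Complex.log (z+1+((n+1:ℕ):ℂ)) + Complex.log (z+1)) * (s-1))‖
          + ‖(∑ j ∈ range (n+1), (Complex.log ((z+1+(j:ℂ))/(z+s+(j:ℂ)))
            + (s-1) * Complex.log (1 + (z+1+(j:ℂ))⁻¹)))‖ := norm_add_le _ _
      _ = ‖(Complex.log ((n:ℕ):ℂ) - Complex.log z
            - Complex.log (z+1+((n+1:ℕ):ℂ)) + Complex.log (z+1))‖ * σ
          + ‖(∑ j ∈ range (n+1), (Complex.log ((z+1+(j:ℂ))/(z+s+(j:ℂ)))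
            + (s-1) * Complex.log (1 + (z+1+(j:ℂ))⁻¹)))‖ := by rw [norm_mul, ← hσdef]
      _ ≤ (‖(Complex.log ((z+1+((n+1:ℕ):ℂ))/((n:ℕ):ℂ)))‖ + 2/Z) * σ + D/Z :=
          add_le_add (mul_le_mul_of_nonneg_right hbr hσ) (hsum n)
      _ = σ * ‖(Complex.log ((z+1+((n+1:ℕ):ℂ))/((n:ℕ):ℂ)))‖ + (2*σ + D)/Z := by
          ring
  -- eventual bound
  have hEZ2 : E/Z ≤ 1/2 := by
    rw [div_le_iff₀ hZpos]
    linarith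
  have hDE : (2*σ+D)/Z ≤ E/Z := by
    gcongr
    rw [hE]
    linarith
  have hev : ∀ᶠ n in atTop,
      ‖(z^(1-s) * Complex.GammaSeq (z+s) n / Complex.GammaSeq (z+1) n - 1)‖
      ≤ 2*(σ * ‖(Complex.log ((z+1+((n+1:ℕ):ℂ))/((n:ℕ):ℂ)))‖) + 2*(E/Z) := by
    have hhp : (0:ℝ) < 1/(2*(σ+1)) := by positivity
    filter_upwards [htn.eventually_lt_const hhp, eventually_ne_atTop 0] with n h1 h2
    have h3 : σ * ‖(Complex.log ((z+1+((n+1:ℕ):ℂ))/((n:ℕ):ℂ)))‖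
        ≤ σ * (1/(2*(σ+1))) := mul_le_mul_of_nonneg_left (le_of_lt h1) hσ
    have h4 : σ * (1/(2*(σ+1))) ≤ 1/2 := by
      rw [mul_one_div, div_le_div_iff₀ (by positivity) (by norm_num)]
      linarith
    have hl := hLb n h2
    have hL1 : ‖(L n)‖ ≤ 1 := by linarith
    have hQ1 := Complex.norm_exp_sub_one_le (x := L n) hL1
    rw [← hQexp n h2] at hQ1
    linarith
  have hlim2 : Tendsto (fun n:ℕ =>
      2*(σ * ‖(Complex.log ((z+1+((n+1:ℕ):ℂ))/((n:ℕ):ℂ)))‖) + 2*(E/Z))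
      atTop (𝓝 (2*(E/Z))) := by
    have h7 := ((htn.const_mul σ).const_mul (2:ℝ)).add_const (2*(E/Z))
    simpa using h7
  have habslim : Tendsto (fun n:ℕ =>
      ‖(z^(1-s) * Complex.GammaSeq (z+s) n / Complex.GammaSeq (z+1) n - 1)‖) atTop
      (𝓝 (‖(z^(1-s) * Complex.Gamma (z+s) / Complex.Gamma (z+1) - 1)‖)) :=
    (continuous_norm.tendsto _).comp (hQlim.sub tendsto_const_nhds)
  have hfinal := le_of_tendsto_of_tendsto habslim hlim2 hev
  have e3 : 2*(E/Z) = 2*E/Z := by ring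
  rw [e3] at hfinal
  exact hfinal


end StokesAux

/-- The unfolded Stokes coefficient
`λ⁺(ε) = (-2πi·e^{πi(1-a-b)}/(Γ(a)Γ(b)))·ε^{a+b-1}·Γ(a+b+1/ε)/Γ(1+1/ε)`
tends, as `ε → 0` in the sector `S⁺`, to the Stokes multiplier
`λ = -2πi·e^{πi(1-a-b)}/(Γ(a)Γ(b))`. -/
theorem lambdaPlus_tendsto_lambda (a b : ℂ) (γ : ℝ) (hγ : γ ∈ Set.Ioo 0 (π / 2)) :
    ∃ r : ℝ, 0 < r ∧
      Tendsto
        (fun ε : ℂ =>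
          (-2 * π * I * Complex.exp (π * I * (1 - a - b)) /
              (Complex.Gamma a * Complex.Gamma b)) *
            ε ^ (a + b - 1) * Complex.Gamma (a + b + 1 / ε) / Complex.Gamma (1 + 1 / ε))
        (nhdsWithin 0
          {ε : ℂ | 0 < ‖ε‖ ∧ ‖ε‖ < r ∧ ε.arg ∈ Set.Ioo (-π + γ) (π - γ)})
        (nhds (-2 * π * I * Complex.exp (π * I * (1 - a - b)) /
          (Complex.Gamma a * Complex.Gamma b))) := by
  obtain ⟨hγ0, hγ2⟩ := hγ
  obtain ⟨C, hC, R, hR1, hkey⟩ := StokesAux.key (a+b) hγ0 hγ2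
  have hRpos : (0:ℝ) < R := lt_of_lt_of_le one_pos hR1
  refine ⟨1, one_pos, ?_⟩
  set lam := -2 * (π:ℂ) * I * Complex.exp ((π:ℂ) * I * (1 - a - b)) /
      (Complex.Gamma a * Complex.Gamma b) with hlam
  set S := {ε : ℂ | 0 < ‖ε‖ ∧ ‖ε‖ < 1 ∧
      ε.arg ∈ Set.Ioo (-π + γ) (π - γ)} with hS
  rw [tendsto_iff_dist_tendsto_zero]
  have habs0 : Tendsto (fun ε : ℂ => ‖ε‖) (nhdsWithin 0 S) (𝓝 0) := by
    have h1 : Tendsto (fun ε : ℂ => ‖ε‖) (𝓝 0) (𝓝 (‖(0:ℂ)‖)) :=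
      continuous_norm.tendsto 0
    rw [norm_zero] at h1
    exact h1.mono_left nhdsWithin_le_nhds
  refine squeeze_zero' (g := fun ε : ℂ => (‖lam‖ * C) * ‖ε‖)
    (Eventually.of_forall fun _ => dist_nonneg) ?_ ?_
  · have hmem : ∀ᶠ ε in nhdsWithin 0 S, ε ∈ S := eventually_mem_nhdsWithin
    have hsmall : ∀ᶠ ε in nhdsWithin 0 S, ‖ε‖ < 1/R :=
      habs0.eventually_lt_const (by positivity)
    filter_upwards [hmem, hsmall] with ε hε hεR
    have hεpos : 0 < ‖ε‖ := hε.1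
    have harg := hε.2.2
    have hε0 : ε ≠ 0 := by
      intro h
      rw [h] at hεpos
      simp at hεpos
    have hargne : ε.arg ≠ π := by
      have h1 := harg.2
      intro h
      rw [h] at h1
      linarith
    set w := ε⁻¹ with hw
    have hw0 : w ≠ 0 := inv_ne_zero hε0
    have hargw : w.arg = -ε.arg := by rw [hw, Complex.arg_inv, if_neg hargne]
    have habsw : ‖w‖ = (‖ε‖)⁻¹ := norm_inv _
    have hwsec : w ∈ StokesAux.sector γ := by
      refine ⟨hw0, ?_⟩
      have h1 : |w.arg| ≤ π - γ := by
        rw [hargw, abs_neg, abs_le]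
        exact ⟨by linarith [harg.1], by linarith [harg.2]⟩
      have h2 : Real.cos (π - γ) ≤ Real.cos w.arg := by
        rw [← Real.cos_abs w.arg]
        exact Real.cos_le_cos_of_nonneg_of_le_pi (abs_nonneg _)
          (by linarith [Real.pi_pos]) h1
      rw [Real.cos_pi_sub] at h2
      have h3 := Complex.norm_mul_cos_arg w
      have h4 : ‖w‖ * (-(Real.cos γ)) ≤ ‖w‖ * Real.cos w.arg :=
        mul_le_mul_of_nonneg_left h2 (norm_nonneg w)
      rw [h3] at h4
      nlinarith [h4]
    have hwR : R ≤ ‖w‖ := by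
      rw [habsw]
      have h5 : ‖ε‖ ≤ R⁻¹ := by
        rw [← one_div]
        linarith
      have h6 := inv_anti₀ hεpos h5
      rwa [inv_inv] at h6
    have hkey' := hkey w hwsec hwR
    have hpow : ε ^ (a+b-1) = w ^ (1-(a+b)) := by
      rw [hw, Complex.inv_cpow _ _ hargne, ← Complex.cpow_neg]
      congr 1
      ring
    have hfun : lam * ε ^ (a+b-1) * Complex.Gamma (a+b+1/ε) / Complex.Gamma (1+1/ε) - lam
        = lam * (w ^ (1-(a+b)) * Complex.Gamma (w+(a+b)) / Complex.Gamma (w+1) - 1) := by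
      rw [hpow, one_div, ← hw, show a+b+w = w+(a+b) from by ring,
        show (1:ℂ)+w = w+1 from by ring]
      ring
    rw [Complex.dist_eq, hfun, norm_mul]
    calc ‖lam‖ * ‖(w ^ (1-(a+b)) * Complex.Gamma (w+(a+b))
          / Complex.Gamma (w+1) - 1)‖
        ≤ ‖lam‖ * (C / ‖w‖) :=
          mul_le_mul_of_nonneg_left hkey' (norm_nonneg lam)
      _ = (‖lam‖ * C) * ‖ε‖ := by
          rw [habsw, div_inv_eq_mul]
          ring
  · have := habs0.const_mul (‖lam‖ * C)
    simpa using this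
end

section
/- Let a, b ∈ ℂ, and let a', b', c', ε, ε' satisfy c' = 1 - (1-1/ε) + a + b, ε' = 1/(1-c'), a' = a, b' = b. If w is analytic on an open set U and satisfies x(x-ε)w''(x) + (1-ε+(a+b+1)x)w'(x) + ab·w(x) = 0 on U, then the function w̃ defined by w̃(x') = w(x) with x' = ε'(1 - x/ε) satisfies x'(x'-ε')w̃''(x') + (1-ε'+(a'+b'+1)x')w̃'(x') + a'b'·w̃(x') = 0 on the image of U under x ↦ ε'(1-x/ε). -/
open Complex

/-- The symmetry of the unfolded hypergeometric equation exchanging the two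
regular singular points `x = 0` and `x = ε`: with `c = 1-1/ε`, `c' = 1-c+a+b`,
`ε' = 1/(1-c')`, the change of variable `x' = ε'(1-x/ε)` transforms solutions
of the equation with parameter `ε` into solutions of the equation with the
same `a, b` and parameter `ε'`. -/
theorem hypergeometric_symmetry (a b ε : ℂ) (hε : ε ≠ 0)
    (c c' ε' : ℂ) (hc : c = 1 - 1 / ε) (hc' : c' = 1 - c + a + b) (hc'1 : c' ≠ 1)
    (hε' : ε' = 1 / (1 - c'))
    (U : Set ℂ) (hU : IsOpen U) (w : ℂ → ℂ) (hw : ∀ x ∈ U, AnalyticAt ℂ w x)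
    (hode : ∀ x ∈ U,
      x * (x - ε) * deriv (deriv w) x + (1 - ε + (a + b + 1) * x) * deriv w x
        + a * b * w x = 0) :
    ∀ x' ∈ (fun x : ℂ => ε' * (1 - x / ε)) '' U,
      x' * (x' - ε') *
          deriv (deriv (fun z : ℂ => w (ε * (1 - z / ε')))) x' +
        (1 - ε' + (a + b + 1) * x') *
          deriv (fun z : ℂ => w (ε * (1 - z / ε'))) x' +
        a * b * w (ε * (1 - x' / ε')) = 0 := by
  have hc'ne : (1 : ℂ) - c' ≠ 0 := sub_ne_zero.mpr (Ne.symm hc'1)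
  have hε'0 : ε' ≠ 0 := by rw [hε']; exact one_div_ne_zero hc'ne
  set k : ℂ := -(ε / ε') with hk
  set L : ℂ → ℂ := fun z => ε * (1 - z / ε') with hL
  have hLderiv : ∀ z : ℂ, HasDerivAt L k z := by
    intro z
    have h1 : HasDerivAt (fun y : ℂ => ε - ε / ε' * y) (-(ε / ε')) z := by
      simpa using ((hasDerivAt_id z).const_mul (ε / ε')).const_sub ε
    have h2 : L = fun y : ℂ => ε - ε / ε' * y := by
      funext y; rw [hL]; field_simp
    rw [hk, h2]; exact h1
  have hLcont : Continuous L := by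
    apply Continuous.mul continuous_const
    exact Continuous.sub continuous_const (continuous_id.div_const ε')
  have hw0 : AnalyticOnNhd ℂ w U := hw
  have hw' : AnalyticOnNhd ℂ (deriv w) U := hw0.deriv
  rintro x' ⟨x, hx, rfl⟩
  have hLx : L (ε' * (1 - x / ε)) = x := by
    simp only [hL]
    field_simp
    ring
  have hev : ∀ᶠ z in nhds (ε' * (1 - x / ε)), L z ∈ U := by
    have hca : ContinuousAt L (ε' * (1 - x / ε)) := hLcont.continuousAt
    rw [ContinuousAt, hLx] at hca
    exact hca (hU.mem_nhds hx)
  have hderiv1 : ∀ᶠ z in nhds (ε' * (1 - x / ε)),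
      deriv (fun z : ℂ => w (L z)) z = k * deriv w (L z) := by
    filter_upwards [hev] with z hz
    have hwd : HasDerivAt w (deriv w (L z)) (L z) :=
      ((hw _ hz).differentiableAt).hasDerivAt
    have h := (hwd.comp z (hLderiv z)).deriv
    change deriv (w ∘ L) z = k * deriv w (L z)
    rw [h]; ring
  have hd1 : deriv (fun z : ℂ => w (L z)) (ε' * (1 - x / ε)) = k * deriv w x := by
    have hwd : HasDerivAt w (deriv w x) (L (ε' * (1 - x / ε))) := by
      rw [hLx]; exact ((hw x hx).differentiableAt).hasDerivAt
    have h := (hwd.comp _ (hLderiv _)).deriv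
    change deriv (w ∘ L) _ = k * deriv w x
    rw [h]; ring
  have hd2 : deriv (deriv (fun z : ℂ => w (L z))) (ε' * (1 - x / ε))
      = k * (k * deriv (deriv w) x) := by
    have heq : deriv (deriv (fun z : ℂ => w (L z))) (ε' * (1 - x / ε))
        = deriv (fun z => k * deriv w (L z)) (ε' * (1 - x / ε)) :=
      Filter.EventuallyEq.deriv_eq hderiv1
    rw [heq]
    have hwd : HasDerivAt (deriv w) (deriv (deriv w) x) (L (ε' * (1 - x / ε))) := by
      rw [hLx]; exact ((hw' x hx).differentiableAt).hasDerivAt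
    have h2 : HasDerivAt (fun z => deriv w (L z)) (deriv (deriv w) x * k)
        (ε' * (1 - x / ε)) := hwd.comp _ (hLderiv _)
    have h3 := (h2.const_mul k).deriv
    rw [h3]; ring
  simp only []
  rw [hd1, hd2]
  rw [show w (ε * (1 - ε' * (1 - x / ε) / ε')) = w x from congrArg w hLx]
  have key := hode x hx
  have I1 : (ε' * (1 - x / ε)) * (ε' * (1 - x / ε) - ε') * (k * k) = x * (x - ε) := by
    rw [hk]; field_simp; ring
  have hinv : ε' * (1 - c') = 1 := by rw [hε']; field_simp
  have hε'k : ε' * k = -ε := by rw [hk]; field_simp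
  have hcε : c * ε = ε - 1 := by rw [hc]; field_simp
  have hkval : k = 1 - ε + ε * (a + b) := by
    linear_combination (1 - c') * hε'k - k * hinv + ε * hc' - hcε
  have hxε : ε * (x / ε) = x := by field_simp
  have I2 : (1 - ε' + (a + b + 1) * (ε' * (1 - x / ε))) * k
      = 1 - ε + (a + b + 1) * x := by
    linear_combination (-1 + (a + b + 1) * (1 - x / ε)) * hε'k
      + (a + b + 1) * hxε + hkval
  linear_combination key + deriv (deriv w) x * I1 + deriv w x * I2
end
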